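/- arXiv:0911.2778 — 11 statements merged into one kernel-verified Lean document; each statement's English description precedes it below -/
import Mathlib

section
/- Let f : [0,1] → ℝ≥0 be bounded by B ≥ 1 and suppose for every n there exist ξ_n, η_n ∈ [0,1] with ξ_n + η_n ∈ [0,1] and f(ξ_n + η_n) > 2^n (f(ξ_n) + f(η_n)). Then the relation E_f on [0,1]^ℕ is not transitive. -/
open Set

/-- If `f` badly fails subadditivity, then `E_f` is not transitive. -/
theorem stmt1 (f : ℝ → ℝ) (B : ℝ) (hB : 1 ≤ B)
    (hnn : ∀ x ∈ Icc (0:ℝ) 1, 0 ≤ f x)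
    (hbd : ∀ x ∈ Icc (0:ℝ) 1, f x ≤ B)
    (hwit : ∀ n : ℕ, ∃ ξ ∈ Icc (0:ℝ) 1, ∃ η ∈ Icc (0:ℝ) 1, ξ + η ∈ Icc (0:ℝ) 1 ∧
      2 ^ n * (f ξ + f η) < f (ξ + η)) :
    ¬ (∀ x y z : ℕ → ℝ, (∀ n, x n ∈ Icc (0:ℝ) 1) → (∀ n, y n ∈ Icc (0:ℝ) 1) →
      (∀ n, z n ∈ Icc (0:ℝ) 1) →
      (Summable fun n => f |y n - x n|) → (Summable fun n => f |z n - y n|) →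
      Summable fun n => f |z n - x n|) := by
  intro H
  choose ξ hξ η hη hmem hgt using hwit
  set a : ℕ → ℝ := fun n => f (ξ n + η n) with ha
  have hfξ : ∀ n, 0 ≤ f (ξ n) := fun n => hnn _ (hξ n)
  have hfη : ∀ n, 0 ≤ f (η n) := fun n => hnn _ (hη n)
  have hapos : ∀ n, 0 < a n := fun n =>
    lt_of_le_of_lt (mul_nonneg (by positivity) (add_nonneg (hfξ n) (hfη n))) (hgt n)
  have haB : ∀ n, a n ≤ B := fun n => hbd _ (hmem n)
  set k : ℕ → ℕ := fun n => max 1 ⌊1 / a n⌋₊ with hk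
  have hk1 : ∀ n, 1 ≤ k n := fun n => le_max_left _ _
  -- upper bound : (k n) * a n ≤ B
  have hkaB : ∀ n, (k n : ℝ) * a n ≤ B := by
    intro n
    have h0 := hapos n
    rcases le_or_gt 1 (a n) with h | h
    · have h1 : (1 : ℝ) / a n ≤ 1 := by rw [div_le_one h0]; exact h
      have hf1 : ⌊1 / a n⌋₊ ≤ 1 := by
        calc ⌊1 / a n⌋₊ ≤ ⌊(1:ℝ)⌋₊ := Nat.floor_le_floor h1
          _ = 1 := Nat.floor_one
      have hkn : k n = 1 := by
        simp only [hk]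
        omega
      rw [hkn]
      simpa using haB n
    · have h1a : ((⌊1 / a n⌋₊ : ℝ)) ≤ 1 / a n := Nat.floor_le (by positivity)
      have hge : 1 ≤ ⌊1 / a n⌋₊ := by
        apply Nat.le_floor
        push_cast
        exact one_le_one_div h0 h.le
      have hkn : k n = ⌊1 / a n⌋₊ := max_eq_right hge
      rw [hkn]
      calc (⌊1 / a n⌋₊ : ℝ) * a n ≤ (1 / a n) * a n :=
            mul_le_mul_of_nonneg_right h1a h0.le
        _ = 1 := by field_simp
        _ ≤ B := hB
  -- lower bound : 1/2 ≤ (k n) * a n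
  have hkahalf : ∀ n, (1:ℝ)/2 ≤ (k n : ℝ) * a n := by
    intro n
    have h0 := hapos n
    rcases le_or_gt 1 (a n) with h | h
    · have : (1:ℝ) ≤ (k n : ℝ) := by exact_mod_cast hk1 n
      nlinarith
    · have hge : 1 ≤ ⌊1 / a n⌋₊ := by
        apply Nat.le_floor
        push_cast
        exact one_le_one_div h0 h.le
      have hkn : k n = ⌊1 / a n⌋₊ := max_eq_right hge
      have hlt : 1 / a n < (⌊1 / a n⌋₊ : ℝ) + 1 := Nat.lt_floor_add_one _
      have hge' : (1:ℝ) ≤ (⌊1 / a n⌋₊ : ℝ) := by exact_mod_cast hge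
      have h2 : 1 / a n ≤ 2 * (⌊1 / a n⌋₊ : ℝ) := by linarith
      rw [hkn]
      have := mul_le_mul_of_nonneg_right h2 h0.le
      rw [div_mul_cancel₀ _ h0.ne'] at this
      linarith
  -- key comparison bounds for f(ξ n) and f(η n)
  have hsplit : ∀ n, (k n : ℝ) * (f (ξ n) + f (η n)) ≤ B * (1/2)^n := by
    intro n
    have h1 : (2:ℝ)^n * (f (ξ n) + f (η n)) ≤ a n := (hgt n).le
    have hkpos : (0:ℝ) < (k n : ℝ) := by exact_mod_cast hk1 n
    have h2 : (k n : ℝ) * ((2:ℝ)^n * (f (ξ n) + f (η n))) ≤ (k n : ℝ) * a n :=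
      mul_le_mul_of_nonneg_left h1 hkpos.le
    have h3 : (k n : ℝ) * ((2:ℝ)^n * (f (ξ n) + f (η n))) ≤ B := h2.trans (hkaB n)
    have hpow : (0:ℝ) < (2:ℝ)^n := by positivity
    have heq : B * (1/2)^n = B / 2^n := by
      rw [div_pow, one_pow]; ring
    rw [heq, le_div_iff₀ hpow]
    nlinarith
  haveI : Infinite (Σ n, Fin (k n)) :=
    Infinite.of_injective (fun n => (⟨n, ⟨0, hk1 n⟩⟩ : Σ n, Fin (k n)))
      (fun m n h => congrArg Sigma.fst h)
  obtain ⟨D⟩ := nonempty_denumerable (Σ n, Fin (k n))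
  let e : ℕ ≃ (Σ n, Fin (k n)) := (Denumerable.eqv _).symm
  set x : ℕ → ℝ := fun _ => 0 with hx
  set y : ℕ → ℝ := fun j => ξ (e j).1 with hy
  set z : ℕ → ℝ := fun j => ξ (e j).1 + η (e j).1 with hz
  have hgeo : Summable fun n : ℕ => B * (1/2)^n :=
    (summable_geometric_of_lt_one (by norm_num) (by norm_num)).mul_left B
  -- summability of the ξ part
  have habsy : ∀ j, |y j - x j| = ξ (e j).1 := by
    intro j
    simp only [hx, hy, sub_zero]
    exact abs_of_nonneg (hξ _).1
  have habsz : ∀ j, |z j - y j| = η (e j).1 := by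
    intro j
    simp only [hz, hy, add_sub_cancel_left]
    exact abs_of_nonneg (hη _).1
  have habszx : ∀ j, |z j - x j| = ξ (e j).1 + η (e j).1 := by
    intro j
    simp only [hx, hz, sub_zero]
    exact abs_of_nonneg (by have := (hξ (e j).1).1; have := (hη (e j).1).1; linarith)
  have tsum_fin : ∀ (n : ℕ) (c : ℝ), (∑' _ : Fin (k n), c) = (k n : ℝ) * c := by
    intro n c
    rw [tsum_fintype]
    simp [Finset.sum_const, nsmul_eq_mul]
  have hsummand : ∀ (g : ℕ → ℝ), (∀ n, 0 ≤ g n) → (∀ n, g n ≤ f (ξ n) + f (η n)) →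
      Summable fun j => g (e j).1 := by
    intro g hg0 hgle
    apply (Equiv.summable_iff e (f := fun p : Σ n, Fin (k n) => g p.1)).mpr
    rw [summable_sigma_of_nonneg (fun p => hg0 p.1)]
    constructor
    · intro b; exact Summable.of_finite
    · apply Summable.of_nonneg_of_le (fun n => ?_) (fun n => ?_) hgeo
      · have heq : (∑' y : Fin (k n), g (⟨n, y⟩ : Σ n, Fin (k n)).1) = (k n : ℝ) * g n :=
          tsum_fin n (g n)
        rw [heq]
        have : (0:ℝ) ≤ (k n : ℝ) := by positivity
        exact mul_nonneg this (hg0 n)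
      · have heq : (∑' y : Fin (k n), g (⟨n, y⟩ : Σ n, Fin (k n)).1) = (k n : ℝ) * g n :=
          tsum_fin n (g n)
        rw [heq]
        calc (k n : ℝ) * g n ≤ (k n : ℝ) * (f (ξ n) + f (η n)) := by
              apply mul_le_mul_of_nonneg_left (hgle n) (by positivity)
          _ ≤ B * (1/2)^n := hsplit n
  have hsum1 : Summable fun j => f |y j - x j| := by
    simp only [habsy]
    exact hsummand (fun n => f (ξ n)) hfξ (fun n => by linarith [hfη n])
  have hsum2 : Summable fun j => f |z j - y j| := by
    simp only [habsz]
    exact hsummand (fun n => f (η n)) hfη (fun n => by linarith [hfξ n])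
  have hsum3 := H x y z (fun n => Set.mem_Icc.mpr ⟨le_refl 0, zero_le_one⟩)
    (fun n => hξ _) (fun n => hmem _) hsum1 hsum2
  simp only [habszx] at hsum3
  -- transport to the sigma type
  have hsig : Summable fun p : Σ n, Fin (k n) => a p.1 :=
    (Equiv.summable_iff e (f := fun p : Σ n, Fin (k n) => a p.1)).mp hsum3
  have hfib : Summable fun n => ∑' _ : Fin (k n), a n :=
    hsig.sigma' (fun b => Summable.of_finite)
  have hfib' : Summable fun n => (k n : ℝ) * a n := by
    simpa only [tsum_fin] using hfib
  have htend := hfib'.tendsto_atTop_zero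
  have := htend.eventually (eventually_lt_nhds (show (0:ℝ) < 1/2 by norm_num))
  obtain ⟨n, hn⟩ := this.exists
  exact absurd (hkahalf n) (not_le.mpr hn)
end

section
/- Define ρ_k : ℝ → [0,1] by ρ_k(x) = 1 if k < ⌊x⌋, ρ_k(x) = x − ⌊x⌋ if k = ⌊x⌋, and ρ_k(x) = 0 if k > ⌊x⌋. Then for all real x, y: |y − x| = Σ_{k∈ℤ} |ρ_k(y) − ρ_k(x)|, and moreover for p ≥ 1, Σ_{k∈ℤ} |ρ_k(y) − ρ_k(x)|^p ≤ |y−x|^p, and if |y−x| ≤ 1 then |y−x|^p ≤ 2^p Σ_{k∈ℤ} |ρ_k(y) − ρ_k(x)|^p. -/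
open Set

noncomputable def rr (k : ℤ) (x : ℝ) : ℝ :=
  if k < ⌊x⌋ then 1 else if k = ⌊x⌋ then x - (⌊x⌋ : ℝ) else 0

lemma rr_nonneg (k : ℤ) (x : ℝ) : 0 ≤ rr k x := by
  unfold rr
  split_ifs with h1 h2
  · norm_num
  · have := Int.floor_le x; linarith
  · norm_num

lemma rr_le_one (k : ℤ) (x : ℝ) : rr k x ≤ 1 := by
  unfold rr
  split_ifs with h1 h2
  · norm_num
  · have := Int.lt_floor_add_one x; linarith
  · norm_num

lemma rr_mono (k : ℤ) {x y : ℝ} (h : x ≤ y) : rr k x ≤ rr k y := by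
  have hmn : ⌊x⌋ ≤ ⌊y⌋ := Int.floor_le_floor h
  have h1 := Int.floor_le x
  have h2 := Int.lt_floor_add_one x
  have h3 := Int.floor_le y
  have h4 := Int.lt_floor_add_one y
  unfold rr
  split_ifs with a b c d e f <;>
    first
      | (exfalso; omega)
      | (have hfl : ⌊x⌋ = ⌊y⌋ := by omega
         rw [hfl]; linarith)
      | linarith
      | norm_num

lemma rr_eq_zero_of_gt {k : ℤ} {x : ℝ} (h : ⌊x⌋ < k) : rr k x = 0 := by
  unfold rr; split_ifs with h1 h2 <;> first | rfl | omega

lemma rr_eq_one_of_lt {k : ℤ} {x : ℝ} (h : k < ⌊x⌋) : rr k x = 1 := by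
  unfold rr; split_ifs with h1 h2 <;> first | rfl | omega

lemma rr_sum {x y : ℝ} (h : x ≤ y) :
    ∑ k ∈ Finset.Icc ⌊x⌋ ⌊y⌋, (rr k y - rr k x) = y - x := by
  have hmn : ⌊x⌋ ≤ ⌊y⌋ := Int.floor_le_floor h
  rw [Finset.sum_sub_distrib]
  have hy : ∑ k ∈ Finset.Icc ⌊x⌋ ⌊y⌋, rr k y = ((⌊y⌋ - ⌊x⌋ : ℤ) : ℝ) + (y - ⌊y⌋) := by
    rw [← Finset.Ico_insert_right hmn, Finset.sum_insert Finset.right_notMem_Ico]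
    have : ∀ k ∈ Finset.Ico ⌊x⌋ ⌊y⌋, rr k y = 1 := fun k hk =>
      rr_eq_one_of_lt (Finset.mem_Ico.mp hk).2
    rw [Finset.sum_congr rfl this, Finset.sum_const, Int.card_Ico]
    have hn : rr ⌊y⌋ y = y - ⌊y⌋ := by unfold rr; simp
    rw [hn]
    have h5 : ((⌊y⌋ - ⌊x⌋).toNat : ℤ) = ⌊y⌋ - ⌊x⌋ := Int.toNat_of_nonneg (by omega)
    have h6 : (((⌊y⌋ - ⌊x⌋).toNat : ℕ) : ℝ) = (⌊y⌋ : ℝ) - ⌊x⌋ := by exact_mod_cast congrArg (Int.cast : ℤ → ℝ) h5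
    push_cast
    simp only [nsmul_eq_mul, mul_one]
    rw [h6]
    ring
  have hx : ∑ k ∈ Finset.Icc ⌊x⌋ ⌊y⌋, rr k x = x - ⌊x⌋ := by
    rw [← Finset.Ioc_insert_left hmn, Finset.sum_insert Finset.left_notMem_Ioc]
    have : ∀ k ∈ Finset.Ioc ⌊x⌋ ⌊y⌋, rr k x = 0 := fun k hk =>
      rr_eq_zero_of_gt (Finset.mem_Ioc.mp hk).1
    rw [Finset.sum_congr rfl this, Finset.sum_const_zero]
    have hm : rr ⌊x⌋ x = x - ⌊x⌋ := by unfold rr; simp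
    rw [hm]; ring
  rw [hy, hx]; push_cast; ring

lemma rr_vanish {x y : ℝ} (h : x ≤ y) {k : ℤ} (hk : k ∉ Finset.Icc ⌊x⌋ ⌊y⌋) :
    rr k y - rr k x = 0 := by
  rw [Finset.mem_Icc] at hk
  push_neg at hk
  have hmn : ⌊x⌋ ≤ ⌊y⌋ := Int.floor_le_floor h
  rcases lt_or_ge k ⌊x⌋ with hl | hl
  · rw [rr_eq_one_of_lt hl, rr_eq_one_of_lt (lt_of_lt_of_le hl hmn)]; ring
  · have hgt : ⌊y⌋ < k := hk hl
    rw [rr_eq_zero_of_gt hgt, rr_eq_zero_of_gt (lt_of_le_of_lt hmn hgt)]; ring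

lemma rr_hasSum {x y : ℝ} (h : x ≤ y) :
    HasSum (fun k : ℤ => |rr k y - rr k x|) |y - x| := by
  have habs : ∀ k : ℤ, |rr k y - rr k x| = rr k y - rr k x := fun k =>
    abs_of_nonneg (by linarith [rr_mono k h])
  have : |y - x| = ∑ k ∈ Finset.Icc ⌊x⌋ ⌊y⌋, |rr k y - rr k x| := by
    rw [abs_of_nonneg (by linarith), ← rr_sum h]
    exact (Finset.sum_congr rfl fun k _ => habs k).symm
  rw [this]
  exact hasSum_sum_of_ne_finset_zero fun k hk => by rw [habs k, rr_vanish h hk]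

lemma rr_p2 {p x y : ℝ} (hp : 1 ≤ p) (h : x ≤ y) :
    ∑' k : ℤ, |rr k y - rr k x| ^ p ≤ |y - x| ^ p := by
  set s := Finset.Icc ⌊x⌋ ⌊y⌋ with hsdef
  set a : ℤ → ℝ := fun k => |rr k y - rr k x| with ha
  have hp0 : p ≠ 0 := by linarith
  have hvan : ∀ k ∉ s, a k = 0 := fun k hk => by
    rw [ha]; simp only []; rw [rr_vanish h hk, abs_zero]
  have hvanp : ∀ k ∉ s, a k ^ p = 0 := fun k hk => by rw [hvan k hk, Real.zero_rpow hp0]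
  have hanon : ∀ k, 0 ≤ a k := fun k => abs_nonneg _
  have hS : ∑ k ∈ s, a k = |y - x| :=
    ((rr_hasSum h).unique (hasSum_sum_of_ne_finset_zero hvan)).symm
  rw [tsum_eq_sum hvanp]
  have hSnon : 0 ≤ |y - x| := abs_nonneg _
  have hak : ∀ k ∈ s, a k ≤ |y - x| := fun k hk =>
    hS ▸ Finset.single_le_sum (fun j _ => hanon j) hk
  rcases eq_or_lt_of_le hSnon with hS0 | hSpos
  · have hz : ∀ k ∈ s, a k ^ p = 0 := fun k hk => by
      have : a k = 0 := le_antisymm (hS0 ▸ hak k hk) (hanon k)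
      rw [this, Real.zero_rpow hp0]
    rw [Finset.sum_congr rfl hz, Finset.sum_const_zero]
    exact Real.rpow_nonneg hSnon p
  · calc ∑ k ∈ s, a k ^ p ≤ ∑ k ∈ s, a k * |y - x| ^ (p - 1) := by
          apply Finset.sum_le_sum
          intro k hk
          rcases eq_or_lt_of_le (hanon k) with h0 | h0
          · rw [← h0, Real.zero_rpow hp0, zero_mul]
          · have e : a k ^ p = a k ^ (p - 1) * a k := by
              rw [← Real.rpow_add_one (ne_of_gt h0) (p - 1)]
              norm_num
            rw [e]
            calc a k ^ (p - 1) * a k ≤ |y - x| ^ (p - 1) * a k :=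
                  mul_le_mul_of_nonneg_right
                    (Real.rpow_le_rpow (le_of_lt h0) (hak k hk) (by linarith)) (le_of_lt h0)
              _ = a k * |y - x| ^ (p - 1) := mul_comm _ _
        _ = |y - x| ^ p := by
          rw [← Finset.sum_mul, hS, mul_comm, ← Real.rpow_add_one (ne_of_gt hSpos) (p - 1)]
          norm_num

lemma rr_p3 {p x y : ℝ} (hp : 1 ≤ p) (h : x ≤ y) (h1 : |y - x| ≤ 1) :
    |y - x| ^ p ≤ 2 ^ p * ∑' k : ℤ, |rr k y - rr k x| ^ p := by
  set a : ℤ → ℝ := fun k => |rr k y - rr k x| with ha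
  have hp0 : p ≠ 0 := by linarith
  have hpn : 0 ≤ p := by linarith
  have hvan : ∀ k ∉ Finset.Icc ⌊x⌋ ⌊y⌋, a k = 0 := fun k hk => by
    rw [ha]; simp only []; rw [rr_vanish h hk, abs_zero]
  have hvanp : ∀ k ∉ Finset.Icc ⌊x⌋ ⌊y⌋, a k ^ p = 0 := fun k hk => by
    rw [hvan k hk, Real.zero_rpow hp0]
  have hanon : ∀ k, 0 ≤ a k := fun k => abs_nonneg _
  have hS : ∑ k ∈ Finset.Icc ⌊x⌋ ⌊y⌋, a k = |y - x| :=
    ((rr_hasSum h).unique (hasSum_sum_of_ne_finset_zero hvan)).symm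
  rw [tsum_eq_sum hvanp]
  have hSnon : 0 ≤ |y - x| := abs_nonneg _
  have hmn : ⌊x⌋ ≤ ⌊y⌋ := Int.floor_le_floor h
  have hyx1 : y ≤ x + 1 := by
    have : |y - x| = y - x := abs_of_nonneg (by linarith)
    linarith
  have hfl : ⌊y⌋ ≤ ⌊x⌋ + 1 := by
    calc ⌊y⌋ ≤ ⌊x + 1⌋ := Int.floor_le_floor hyx1
      _ = ⌊x⌋ + 1 := Int.floor_add_one x
  have h2p1 : (1 : ℝ) ≤ 2 ^ p := Real.one_le_rpow (by norm_num) hpn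
  rcases (by omega : ⌊y⌋ = ⌊x⌋ ∨ ⌊y⌋ = ⌊x⌋ + 1) with hc | hc
  · rw [hc] at hS ⊢
    rw [Finset.Icc_self, Finset.sum_singleton] at hS ⊢
    rw [← hS]
    exact le_mul_of_one_le_left (Real.rpow_nonneg (hanon _) p) h2p1
  · rw [hc] at hS ⊢
    have hpair : Finset.Icc ⌊x⌋ (⌊x⌋ + 1) = {⌊x⌋, ⌊x⌋ + 1} := by
      ext k; simp only [Finset.mem_Icc, Finset.mem_insert, Finset.mem_singleton]; omega
    rw [hpair, Finset.sum_pair (by omega : ⌊x⌋ ≠ ⌊x⌋ + 1)] at hS ⊢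
    set u := a ⌊x⌋
    set v := a (⌊x⌋ + 1)
    have hu : 0 ≤ u := hanon _
    have hv : 0 ≤ v := hanon _
    have hM : 0 ≤ max u v := le_max_of_le_left hu
    have hle : |y - x| ≤ 2 * max u v := by
      rw [← hS]
      have := le_max_left u v
      have := le_max_right u v
      linarith
    calc |y - x| ^ p ≤ (2 * max u v) ^ p := Real.rpow_le_rpow hSnon hle hpn
      _ = 2 ^ p * (max u v) ^ p := Real.mul_rpow (by norm_num) hM
      _ ≤ 2 ^ p * (u ^ p + v ^ p) := by
          apply mul_le_mul_of_nonneg_left _ (Real.rpow_nonneg (by norm_num) p)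
          rcases max_choice u v with hm | hm <;> rw [hm]
          · exact le_add_of_nonneg_right (Real.rpow_nonneg hv p)
          · exact le_add_of_nonneg_left (Real.rpow_nonneg hu p)

/-- Properties of the splitting maps `ρ_k` used in Lemma (mege). -/
theorem stmt2 (p : ℝ) (hp : 1 ≤ p) :
    let ρ : ℤ → ℝ → ℝ := fun k x =>
      if k < ⌊x⌋ then 1 else if k = ⌊x⌋ then x - (⌊x⌋ : ℝ) else 0
    ∀ x y : ℝ,
      HasSum (fun k : ℤ => |ρ k y - ρ k x|) |y - x| ∧
      (∑' k : ℤ, |ρ k y - ρ k x| ^ p) ≤ |y - x| ^ p ∧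
      (|y - x| ≤ 1 → |y - x| ^ p ≤ 2 ^ p * ∑' k : ℤ, |ρ k y - ρ k x| ^ p) := by
  intro ρ x y
  have hρ : ρ = rr := rfl
  rw [hρ]
  rcases le_total x y with hxy | hxy
  · exact ⟨rr_hasSum hxy, rr_p2 hp hxy, fun h1 => rr_p3 hp hxy h1⟩
  · have e1 : (fun k : ℤ => |rr k y - rr k x|) = fun k => |rr k x - rr k y| :=
      funext fun k => abs_sub_comm _ _
    have e3 : (fun k : ℤ => |rr k y - rr k x| ^ p) = fun k => |rr k x - rr k y| ^ p :=
      funext fun k => by rw [abs_sub_comm]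
    have e2 : |y - x| = |x - y| := abs_sub_comm _ _
    rw [e2]
    constructor
    · rw [e1]; exact rr_hasSum hxy
    constructor
    · calc ∑' k : ℤ, |rr k y - rr k x| ^ p = ∑' k : ℤ, |rr k x - rr k y| ^ p := by rw [e3]
        _ ≤ |x - y| ^ p := rr_p2 hp hxy
    · intro h1
      calc |x - y| ^ p ≤ 2 ^ p * ∑' k : ℤ, |rr k x - rr k y| ^ p := rr_p3 hp hxy h1
        _ = 2 ^ p * ∑' k : ℤ, |rr k y - rr k x| ^ p := by rw [e3]
end

section
/- For every p with 1 ≤ p < ∞, the equivalence relation ℓ^p on ℝ^ℕ (given by (x_n) ~ (y_n) ⟺ Σ_n |y_n − x_n|^p < ∞) is Borel reducible to its restriction to [0,1]^ℕ × [0,1]^ℕ. -/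
open Set

noncomputable section ClampAux

/-- The `k`-th clamp function: `t` clamped to `[k, k+1]`, normalized to `[0,1]`. -/
def clampf (k : ℤ) (t : ℝ) : ℝ := min (max (t - k) 0) 1

lemma clampf_mem (k : ℤ) (t : ℝ) : clampf k t ∈ Icc (0:ℝ) 1 :=
  ⟨le_min (le_max_right _ _) zero_le_one, min_le_right _ _⟩

lemma clampf_continuous (k : ℤ) : Continuous (clampf k) := by
  unfold clampf; fun_prop

lemma clampf_mono (k : ℤ) : Monotone (clampf k) := fun s t h => by
  unfold clampf
  exact min_le_min (max_le_max (by linarith) le_rfl) le_rfl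

/-- Auxiliary: positive part. -/
def gp (k : ℤ) (t : ℝ) : ℝ := max (t - k) 0

lemma clampf_eq_gp (k : ℤ) (t : ℝ) : clampf k t = gp k t - gp (k + 1) t := by
  simp only [clampf, gp, min_def, max_def]
  push_cast
  split_ifs <;> linarith

lemma Icc_int_succ (a b : ℤ) (h : a ≤ b + 1) :
    Finset.Icc a (b + 1) = insert (b + 1) (Finset.Icc a b) := by
  ext k; simp only [Finset.mem_Icc, Finset.mem_insert]; omega

lemma tele (h : ℤ → ℝ) (a b : ℤ) (hab : a ≤ b) :
    ∑ k ∈ Finset.Icc a b, (h k - h (k + 1)) = h a - h (b + 1) := by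
  refine Int.le_induction (motive := fun b _ => ∑ k ∈ Finset.Icc a b, (h k - h (k + 1)) = h a - h (b + 1)) ?_ ?_ b hab
  · simp
  · intro b hb ih
    rw [Icc_int_succ a b (by omega), Finset.sum_insert (by simp), ih]; ring

/-- Vanishing outside a finite interval. -/
lemma clampf_sub_eq_zero {s t : ℝ} (hst : s ≤ t) {k : ℤ}
    (hk : k ∉ Finset.Icc (⌈s⌉ - 1) (⌈t⌉ - 1)) : clampf k t - clampf k s = 0 := by
  simp only [Finset.mem_Icc, not_and_or, not_le] at hk
  rcases hk with hk | hk
  · -- k ≤ ⌈s⌉ - 2, so k + 1 < s ≤ t, both clamps equal 1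
    have h1 : (k : ℝ) + 1 ≤ s := by
      have : (k : ℝ) + 2 ≤ ⌈s⌉ := by exact_mod_cast (by omega : k + 2 ≤ ⌈s⌉)
      have := Int.ceil_lt_add_one s
      linarith
    have e1 : clampf k s = 1 := by
      unfold clampf
      rw [max_eq_left (by linarith), min_eq_right (by linarith)]
    have e2 : clampf k t = 1 := by
      unfold clampf
      rw [max_eq_left (by linarith), min_eq_right (by linarith)]
    rw [e1, e2]; ring
  · -- ⌈t⌉ ≤ k, so t ≤ k, both clamps equal 0
    have h1 : t ≤ (k : ℝ) := le_trans (Int.le_ceil t) (by exact_mod_cast (by omega : ⌈t⌉ ≤ k))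
    have e1 : clampf k t = 0 := by
      unfold clampf
      rw [max_eq_right (by linarith), min_eq_left (by linarith)]
    have e2 : clampf k s = 0 := by
      unfold clampf
      rw [max_eq_right (by linarith), min_eq_left (by linarith)]
    rw [e1, e2]; ring

lemma summable_clampf_sub (s t : ℝ) (hst : s ≤ t) :
    Summable fun k : ℤ => clampf k t - clampf k s :=
  summable_of_ne_finset_zero (s := Finset.Icc (⌈s⌉ - 1) (⌈t⌉ - 1))
    (fun k hk => clampf_sub_eq_zero hst hk)

/-- The total variation across all clamps is exactly `t - s`. -/
lemma tsum_clampf_sub (s t : ℝ) (hst : s ≤ t) :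
    ∑' k : ℤ, (clampf k t - clampf k s) = t - s := by
  rw [tsum_eq_sum (s := Finset.Icc (⌈s⌉ - 1) (⌈t⌉ - 1))
    (fun k hk => clampf_sub_eq_zero hst hk)]
  have hab : ⌈s⌉ - 1 ≤ ⌈t⌉ - 1 := by
    have := Int.ceil_le_ceil (R := ℝ) hst; omega
  have : ∀ k, clampf k t - clampf k s = (gp k t - gp k s) - (gp (k+1) t - gp (k+1) s) := by
    intro k; rw [clampf_eq_gp, clampf_eq_gp]; ring
  rw [Finset.sum_congr rfl (fun k _ => this k), tele (fun k => gp k t - gp k s) _ _ hab]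
  have ha : ((⌈s⌉:ℝ) - 1) ≤ s := by have := Int.ceil_lt_add_one s; linarith
  have hb : t ≤ ((⌈t⌉:ℝ) - 1) + 1 := by have := Int.le_ceil t; push_cast; linarith
  have e1 : gp (⌈s⌉ - 1) t = t - (⌈s⌉ - 1) := by
    unfold gp; rw [max_eq_left]; · push_cast; ring
    · push_cast; linarith
  have e2 : gp (⌈s⌉ - 1) s = s - (⌈s⌉ - 1) := by
    unfold gp; rw [max_eq_left]; · push_cast; ring
    · push_cast; linarith
  have e3 : gp (⌈t⌉ - 1 + 1) t = 0 := by
    unfold gp; rw [max_eq_right]; push_cast; linarith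
  have e4 : gp (⌈t⌉ - 1 + 1) s = 0 := by
    unfold gp; rw [max_eq_right]; push_cast; linarith
  rw [e1, e2, e3, e4]; push_cast; ring

end ClampAux

section Bounds

variable {p : ℝ} (hp : 1 ≤ p)

lemma clampf_sub_nonneg {s t : ℝ} (hst : s ≤ t) (k : ℤ) :
    0 ≤ clampf k t - clampf k s := sub_nonneg.2 (clampf_mono k hst)

include hp

lemma summable_clampf_rpow (s t : ℝ) (hst : s ≤ t) :
    Summable fun k : ℤ => (clampf k t - clampf k s) ^ p := by
  refine summable_of_ne_finset_zero (s := Finset.Icc (⌈s⌉ - 1) (⌈t⌉ - 1)) (fun k hk => ?_)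
  rw [clampf_sub_eq_zero hst hk]
  exact Real.zero_rpow (by linarith)

lemma tsum_clampf_rpow_le (s t : ℝ) (hst : s ≤ t) :
    ∑' k : ℤ, (clampf k t - clampf k s) ^ p ≤ (t - s) ^ p := by
  set d := t - s with hd
  have hd0 : 0 ≤ d := by linarith
  have hm0 : 0 ≤ min d 1 := le_min hd0 zero_le_one
  have hsum := summable_clampf_sub s t hst
  have hsump := summable_clampf_rpow hp s t hst
  have hub : ∀ k : ℤ, (clampf k t - clampf k s) ^ p ≤
      min d 1 ^ (p - 1) * (clampf k t - clampf k s) := by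
    intro k
    set u := clampf k t - clampf k s with hu
    have hu0 : 0 ≤ u := clampf_sub_nonneg hst k
    have hu1 : u ≤ 1 := by
      have h1 := (clampf_mem k t).2
      have h2 := (clampf_mem k s).1
      simp only [hu]; linarith
    have hud : u ≤ d := by
      have := Summable.le_tsum hsum k (fun j _ => clampf_sub_nonneg hst j)
      rw [tsum_clampf_sub s t hst] at this; linarith
    have hum : u ≤ min d 1 := le_min hud hu1
    rcases eq_or_lt_of_le hu0 with h | h
    · rw [← h, Real.zero_rpow (by linarith)]
      positivity
    · have : u ^ p = u ^ (p - 1) * u := by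
        rw [← Real.rpow_add_one h.ne' (p - 1)]; ring_nf
      rw [this]
      exact mul_le_mul_of_nonneg_right (Real.rpow_le_rpow hu0 hum (by linarith)) hu0
  calc ∑' k : ℤ, (clampf k t - clampf k s) ^ p
      ≤ ∑' k : ℤ, min d 1 ^ (p - 1) * (clampf k t - clampf k s) :=
        Summable.tsum_le_tsum hub hsump (hsum.mul_left _)
    _ = min d 1 ^ (p - 1) * d := by rw [tsum_mul_left, tsum_clampf_sub s t hst]
    _ ≤ d ^ p := by
        rcases le_total d 1 with h | h
        · rw [min_eq_left h]
          rcases eq_or_lt_of_le hd0 with h0 | h0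
          · rw [← h0, mul_zero, Real.zero_rpow (by linarith)]
          · have : d ^ (p - 1) * d = d ^ p := by
              rw [← Real.rpow_add_one h0.ne' (p - 1)]; ring_nf
            rw [this]
        · rw [min_eq_right h, Real.one_rpow, one_mul]
          calc d = d ^ (1:ℝ) := (Real.rpow_one d).symm
            _ ≤ d ^ p := Real.rpow_le_rpow_of_exponent_le h hp

omit hp in
lemma two_clampf_ge {s t : ℝ} (hst : s ≤ t) :
    min (t - s) 1 ≤ (clampf ⌊s⌋ t - clampf ⌊s⌋ s) + (clampf (⌊s⌋ + 1) t - clampf (⌊s⌋ + 1) s) := by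
  have h1 : (⌊s⌋ : ℝ) ≤ s := Int.floor_le s
  have h2 : s < (⌊s⌋ : ℝ) + 1 := Int.lt_floor_add_one s
  have c1 : clampf ⌊s⌋ s = s - (⌊s⌋ : ℝ) := by
    simp only [clampf]
    rw [max_eq_left (by linarith), min_eq_left (by linarith)]
  have c2 : clampf (⌊s⌋ + 1) s = 0 := by
    simp only [clampf]; push_cast
    rw [max_eq_right (by linarith), min_eq_left (by linarith)]
  have c3 : clampf ⌊s⌋ t = min (t - (⌊s⌋ : ℝ)) 1 := by
    simp only [clampf]
    rw [max_eq_left (by linarith)]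
  rw [c1, c2, c3]
  simp only [clampf]
  push_cast
  simp only [min_def, max_def]
  split_ifs <;> linarith

lemma min_rpow_le_tsum (s t : ℝ) (hst : s ≤ t) :
    min (t - s) 1 ^ p ≤ 2 ^ p * ∑' k : ℤ, (clampf k t - clampf k s) ^ p := by
  set u0 := clampf ⌊s⌋ t - clampf ⌊s⌋ s with hu0
  set u1 := clampf (⌊s⌋ + 1) t - clampf (⌊s⌋ + 1) s with hu1
  have h0 : 0 ≤ u0 := clampf_sub_nonneg hst _
  have h1 : 0 ≤ u1 := clampf_sub_nonneg hst _
  have hsump := summable_clampf_rpow hp s t hst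
  have hm0 : 0 ≤ min (t - s) 1 := le_min (by linarith) zero_le_one
  have hkey : min (t - s) 1 ≤ 2 * max u0 u1 := by
    have := two_clampf_ge hst
    have := le_max_left u0 u1
    have := le_max_right u0 u1
    linarith
  have hmax : max u0 u1 ^ p ≤ ∑' k : ℤ, (clampf k t - clampf k s) ^ p := by
    rcases le_total u0 u1 with h | h
    · rw [max_eq_right h]
      exact Summable.le_tsum hsump (⌊s⌋ + 1) (fun j _ => Real.rpow_nonneg (clampf_sub_nonneg hst j) p)
    · rw [max_eq_left h]
      exact Summable.le_tsum hsump ⌊s⌋ (fun j _ => Real.rpow_nonneg (clampf_sub_nonneg hst j) p)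
  calc min (t - s) 1 ^ p ≤ (2 * max u0 u1) ^ p :=
        Real.rpow_le_rpow hm0 hkey (by linarith)
    _ = 2 ^ p * max u0 u1 ^ p := Real.mul_rpow (by norm_num) (le_max_of_le_left h0)
    _ ≤ 2 ^ p * ∑' k : ℤ, (clampf k t - clampf k s) ^ p := by
        have : (0:ℝ) ≤ 2 ^ p := Real.rpow_nonneg (by norm_num) p
        nlinarith [hmax]

end Bounds


theorem summable_clampf_iff {p : ℝ} (hp : 1 ≤ p) (s t : ℕ → ℝ) (hst : ∀ n, s n ≤ t n) :
    (Summable fun n => (t n - s n) ^ p) ↔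
      Summable fun q : ℕ × ℤ => (clampf q.2 (t q.1) - clampf q.2 (s q.1)) ^ p := by
  have hp0 : (0:ℝ) < p := lt_of_lt_of_le one_pos hp
  have hprod : (Summable fun q : ℕ × ℤ => (clampf q.2 (t q.1) - clampf q.2 (s q.1)) ^ p) ↔
      (∀ n, Summable fun k : ℤ => (clampf k (t n) - clampf k (s n)) ^ p) ∧
        Summable fun n => ∑' k : ℤ, (clampf k (t n) - clampf k (s n)) ^ p :=
    summable_prod_of_nonneg fun q => Real.rpow_nonneg (clampf_sub_nonneg (hst q.1) q.2) p
  have hinner : ∀ n, Summable fun k : ℤ => (clampf k (t n) - clampf k (s n)) ^ p := fun n =>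
    summable_clampf_rpow hp _ _ (hst n)
  have hS0 : ∀ n, 0 ≤ ∑' k : ℤ, (clampf k (t n) - clampf k (s n)) ^ p := fun n =>
    tsum_nonneg fun k => Real.rpow_nonneg (clampf_sub_nonneg (hst n) k) p
  have hSub : ∀ n, ∑' k : ℤ, (clampf k (t n) - clampf k (s n)) ^ p ≤ (t n - s n) ^ p :=
    fun n => tsum_clampf_rpow_le hp _ _ (hst n)
  have hSlb : ∀ n, min (t n - s n) 1 ^ p ≤
      2 ^ p * ∑' k : ℤ, (clampf k (t n) - clampf k (s n)) ^ p := fun n =>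
    min_rpow_le_tsum hp _ _ (hst n)
  constructor
  · intro h
    exact hprod.mpr ⟨hinner, Summable.of_nonneg_of_le hS0 hSub h⟩
  · intro h
    have hSsum : Summable fun n => ∑' k : ℤ, (clampf k (t n) - clampf k (s n)) ^ p :=
      (hprod.mp h).2
    have hg : Summable fun n => min (t n - s n) 1 ^ p :=
      Summable.of_nonneg_of_le
        (fun n => Real.rpow_nonneg (le_min (by linarith [hst n]) zero_le_one) p)
        hSlb (hSsum.mul_left _)
    have hA : {n | 1 < t n - s n}.Finite := by
      have hev := hg.tendsto_cofinite_zero.eventually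
        (gt_mem_nhds (by norm_num : (0:ℝ) < 1))
      rw [Filter.eventually_cofinite] at hev
      refine hev.subset fun n hn => ?_
      simp only [Set.mem_setOf_eq, not_lt]
      rw [min_eq_right (le_of_lt hn), Real.one_rpow]
    have hh : Summable fun n => (t n - s n) ^ p - min (t n - s n) 1 ^ p := by
      refine summable_of_ne_finset_zero (s := hA.toFinset) fun n hn => ?_
      rw [Set.Finite.mem_toFinset] at hn
      simp only [Set.mem_setOf_eq, not_lt] at hn
      rw [min_eq_left hn, sub_self]
    exact (hg.add hh).congr fun n => by ring

/-- `ℓ^p` on `ℝ^ℕ` Borel reduces to its restriction to `[0,1]^ℕ`. -/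
theorem stmt3 (p : ℝ) (hp : 1 ≤ p) :
    ∃ ϑ : (ℕ → ℝ) → (ℕ → ℝ), Measurable ϑ ∧
      (∀ x n, ϑ x n ∈ Icc (0:ℝ) 1) ∧
      ∀ x y : ℕ → ℝ,
        ((Summable fun n => |y n - x n| ^ p) ↔ Summable fun n => |ϑ y n - ϑ x n| ^ p) := by
  classical
  set e : ℕ ≃ ℕ × ℤ := (Denumerable.eqv (ℕ × ℤ)).symm with he
  refine ⟨fun x m => clampf (e m).2 (x (e m).1), ?_, ?_, ?_⟩
  · exact measurable_pi_lambda _ fun m =>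
      ((clampf_continuous _).measurable).comp (measurable_pi_apply _)
  · intro x n; exact clampf_mem _ _
  · intro x y
    have hmm : ∀ n, min (x n) (y n) ≤ max (x n) (y n) := fun n => min_le_max
    have habs : ∀ n, |y n - x n| = max (x n) (y n) - min (x n) (y n) := fun n =>
      (max_sub_min_eq_abs (x n) (y n)).symm
    have hterm : ∀ (n : ℕ) (k : ℤ),
        |clampf k (y n) - clampf k (x n)|
          = clampf k (max (x n) (y n)) - clampf k (min (x n) (y n)) := by
      intro n k
      rcases le_total (x n) (y n) with h | h
      · simp only [max_eq_right h, min_eq_left h]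
        exact abs_of_nonneg (sub_nonneg.2 (clampf_mono k h))
      · simp only [max_eq_left h, min_eq_right h]
        rw [abs_of_nonpos (sub_nonpos.2 (clampf_mono k h))]; ring
    have hmain := summable_clampf_iff hp (fun n => min (x n) (y n))
      (fun n => max (x n) (y n)) hmm
    constructor
    · intro h
      have h1 : Summable fun n => (max (x n) (y n) - min (x n) (y n)) ^ p :=
        h.congr fun n => by rw [habs]
      have h2 := hmain.mp h1
      rw [← e.summable_iff] at h2
      refine h2.congr fun m => ?_
      simp only [Function.comp_apply]
      rw [hterm]
    · intro h
      have h2 : Summable fun q : ℕ × ℤ =>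
          (clampf q.2 (max (x q.1) (y q.1)) - clampf q.2 (min (x q.1) (y q.1))) ^ p := by
        rw [← e.summable_iff]
        refine h.congr fun m => ?_
        simp only [Function.comp_apply]
        rw [← hterm]
      have h1 := hmain.mpr h2
      refine h1.congr fun n => ?_
      rw [habs]
end

section
/- Let f : [0,1] → ℝ≥0 be bounded with f(0) = 0, continuous at 0, and suppose there is C ≥ 1 with f(x+y) ≤ C(f(x)+f(y)) and f(x) ≤ C(f(x+y)+f(y)) whenever x, y, x+y ∈ [0,1]. Define ε(a) = (1/2)·sup{ y ∈ [0,1] : f(d) ≤ a/(2C) for all 0 ≤ d ≤ y }. Then ε is increasing, ε(a) > 0 for a > 0, and for all x, y ∈ [0,1] with |y − x| ≤ ε(f(x)) one has f(x)/(2C) ≤ f(y) ≤ 2C·f(x). -/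
open Set

/-- The modulus `ε` from Proposition (f_e): monotonicity, positivity and comparability. -/
theorem stmt4 (f : ℝ → ℝ) (B : ℝ)
    (hbd : ∀ x ∈ Icc (0:ℝ) 1, f x ≤ B)
    (hnn : ∀ x ∈ Icc (0:ℝ) 1, 0 ≤ f x)
    (hf0 : f 0 = 0)
    (hcont : ContinuousWithinAt f (Icc (0:ℝ) 1) 0)
    (C : ℝ) (hC : 1 ≤ C)
    (hR2a : ∀ x ∈ Icc (0:ℝ) 1, ∀ y ∈ Icc (0:ℝ) 1, x + y ∈ Icc (0:ℝ) 1 →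
      f (x + y) ≤ C * (f x + f y))
    (hR2b : ∀ x ∈ Icc (0:ℝ) 1, ∀ y ∈ Icc (0:ℝ) 1, x + y ∈ Icc (0:ℝ) 1 →
      f x ≤ C * (f (x + y) + f y)) :
    let ε : ℝ → ℝ := fun a =>
      (1 / 2) * sSup {y | y ∈ Icc (0:ℝ) 1 ∧ ∀ d, 0 ≤ d → d ≤ y → f d ≤ a / (2 * C)}
    (∀ a b : ℝ, 0 ≤ a → a ≤ b → ε a ≤ ε b) ∧
    (∀ a : ℝ, 0 < a → 0 < ε a) ∧
    ∀ x ∈ Icc (0:ℝ) 1, ∀ y ∈ Icc (0:ℝ) 1, |y - x| ≤ ε (f x) →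
      f x / (2 * C) ≤ f y ∧ f y ≤ 2 * C * f x := by
  have hC0 : (0:ℝ) < C := lt_of_lt_of_le one_pos hC
  have h2C : (0:ℝ) < 2 * C := by linarith
  intro ε
  set S : ℝ → Set ℝ := fun a =>
    {y | y ∈ Icc (0:ℝ) 1 ∧ ∀ d, 0 ≤ d → d ≤ y → f d ≤ a / (2 * C)} with hS
  have hmem0 : ∀ a : ℝ, 0 ≤ a → (0:ℝ) ∈ S a := by
    intro a ha
    refine ⟨⟨le_refl 0, zero_le_one⟩, ?_⟩
    intro d hd hd0
    have hd' : d = 0 := le_antisymm hd0 hd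
    rw [hd', hf0]
    positivity
  have hbdd : ∀ a : ℝ, BddAbove (S a) := fun a => ⟨1, fun y hy => hy.1.2⟩
  -- key : anything below ε a is controlled
  have key : ∀ a : ℝ, 0 ≤ a → ∀ d : ℝ, 0 ≤ d → d ≤ ε a → f d ≤ a / (2 * C) := by
    intro a ha d hd hdle
    rcases eq_or_lt_of_le hd with h0 | h0
    · rw [← h0, hf0]; positivity
    · have hlt : d < sSup (S a) := by
        have : ε a = (1/2) * sSup (S a) := rfl
        rw [this] at hdle
        linarith
      obtain ⟨z, hz, hdz⟩ := exists_lt_of_lt_csSup ⟨0, hmem0 a ha⟩ hlt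
      exact hz.2 d hd (le_of_lt hdz)
  refine ⟨?_, ?_, ?_⟩
  · -- monotonicity
    intro a b ha hab
    have hsub : S a ⊆ S b := by
      intro y hy
      refine ⟨hy.1, fun d hd hdy => le_trans (hy.2 d hd hdy) ?_⟩
      gcongr
    have : sSup (S a) ≤ sSup (S b) :=
      csSup_le_csSup (hbdd b) ⟨0, hmem0 a ha⟩ hsub
    show (1/2) * sSup (S a) ≤ (1/2) * sSup (S b)
    linarith
  · -- positivity
    intro a ha
    rw [Metric.continuousWithinAt_iff] at hcont
    obtain ⟨δ, hδ, hδ'⟩ := hcont (a / (2 * C)) (by positivity)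
    set y₀ : ℝ := min (δ / 2) 1 with hy₀
    have hy₀pos : 0 < y₀ := lt_min (by linarith) one_pos
    have hy₀S : y₀ ∈ S a := by
      refine ⟨⟨le_of_lt hy₀pos, min_le_right _ _⟩, ?_⟩
      intro d hd hdy
      have hd1 : d ∈ Icc (0:ℝ) 1 := ⟨hd, le_trans hdy (min_le_right _ _)⟩
      have hdist : dist d 0 < δ := by
        rw [Real.dist_eq, sub_zero, abs_of_nonneg hd]
        have := min_le_left (δ / 2) 1
        linarith [le_trans hdy this]
      have := hδ' hd1 hdist
      rw [hf0, Real.dist_eq, sub_zero] at this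
      calc f d ≤ |f d| := le_abs_self _
        _ ≤ a / (2 * C) := le_of_lt this
    have : y₀ ≤ sSup (S a) := le_csSup (hbdd a) hy₀S
    have : (0:ℝ) < sSup (S a) := lt_of_lt_of_le hy₀pos this
    show (0:ℝ) < (1/2) * sSup (S a)
    linarith
  · -- comparability
    intro x hx y hy hxy
    have ha : 0 ≤ f x := hnn x hx
    have hfh : f |y - x| ≤ f x / (2 * C) := key (f x) ha _ (abs_nonneg _) hxy
    have hmul : C * (f x / (2 * C)) = f x / 2 := by field_simp
    rcases le_total x y with hle | hle
    · have habs : |y - x| = y - x := abs_of_nonneg (by linarith)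
      rw [habs] at hfh
      have hmemh : y - x ∈ Icc (0:ℝ) 1 := ⟨by linarith, by
        have := hx.1; have := hy.2; linarith⟩
      have hsum : x + (y - x) ∈ Icc (0:ℝ) 1 := by
        simpa using hy
      have h1 := hR2a x hx (y - x) hmemh hsum
      have h2 := hR2b x hx (y - x) hmemh hsum
      rw [show x + (y - x) = y by ring] at h1 h2
      have hmul1 : C * f (y - x) ≤ f x / 2 := by
        calc C * f (y - x) ≤ C * (f x / (2 * C)) := by
              exact mul_le_mul_of_nonneg_left hfh (le_of_lt hC0)
          _ = f x / 2 := hmul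
      constructor
      · rw [div_le_iff₀ h2C]
        nlinarith
      · nlinarith
    · have habs : |y - x| = x - y := by
        rw [abs_of_nonpos (by linarith : y - x ≤ 0)]; ring
      rw [habs] at hfh
      have hmemh : x - y ∈ Icc (0:ℝ) 1 := ⟨by linarith, by
        have := hy.1; have := hx.2; linarith⟩
      have hsum : y + (x - y) ∈ Icc (0:ℝ) 1 := by
        simpa using hx
      have h1 := hR2a y hy (x - y) hmemh hsum
      have h2 := hR2b y hy (x - y) hmemh hsum
      rw [show y + (x - y) = x by ring] at h1 h2
      have hmul1 : C * f (x - y) ≤ f x / 2 := by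
        calc C * f (x - y) ≤ C * (f x / (2 * C)) := by
              exact mul_le_mul_of_nonneg_left hfh (le_of_lt hC0)
          _ = f x / 2 := hmul
      constructor
      · rw [div_le_iff₀ h2C]
        nlinarith
      · nlinarith
end

section
/- Let f : [0,1] → ℝ≥0 be bounded, continuous at 0, with f(0)=0, satisfying (R2) with constant C. Then the set U = {x ∈ [0,1] : f(x) > 0} is open in [0,1], and f is continuous at every point of [0,1] \ U. -/
open Set

/-- `{f > 0}` is open in `[0,1]` and `f` is continuous at the zero set. -/
theorem stmt5 (f : ℝ → ℝ) (B : ℝ)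
    (hbd : ∀ x ∈ Icc (0:ℝ) 1, f x ≤ B)
    (hnn : ∀ x ∈ Icc (0:ℝ) 1, 0 ≤ f x)
    (hf0 : f 0 = 0)
    (hcont : ContinuousWithinAt f (Icc (0:ℝ) 1) 0)
    (C : ℝ) (hC : 1 ≤ C)
    (hR2a : ∀ x ∈ Icc (0:ℝ) 1, ∀ y ∈ Icc (0:ℝ) 1, x + y ∈ Icc (0:ℝ) 1 →
      f (x + y) ≤ C * (f x + f y))
    (hR2b : ∀ x ∈ Icc (0:ℝ) 1, ∀ y ∈ Icc (0:ℝ) 1, x + y ∈ Icc (0:ℝ) 1 →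
      f x ≤ C * (f (x + y) + f y)) :
    (∃ V : Set ℝ, IsOpen V ∧ {x ∈ Icc (0:ℝ) 1 | 0 < f x} = V ∩ Icc (0:ℝ) 1) ∧
    ∀ x ∈ Icc (0:ℝ) 1, f x = 0 → ContinuousWithinAt f (Icc (0:ℝ) 1) x := by
  have hCpos : (0:ℝ) < C := lt_of_lt_of_le one_pos hC
  -- key inequality
  have key : ∀ x ∈ Icc (0:ℝ) 1, ∀ y ∈ Icc (0:ℝ) 1, f y ≤ C * (f x + f |y - x|) := by
    intro x hx y hy
    have habs : |y - x| ∈ Icc (0:ℝ) 1 := by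
      constructor
      · exact abs_nonneg _
      · rw [abs_le]
        constructor <;> linarith [hx.1, hx.2, hy.1, hy.2]
    rcases le_or_gt x y with h | h
    · have heq : |y - x| = y - x := abs_of_nonneg (by linarith)
      rw [heq]
      have := hR2a x hx (y - x) (heq ▸ habs) (by simpa using hy)
      simpa using this
    · have heq : |y - x| = x - y := by
        rw [abs_sub_comm]; exact abs_of_nonneg (by linarith)
      rw [heq]
      have := hR2b y hy (x - y) (heq ▸ habs) (by simpa using hx)
      simpa using this
  -- smallness of f near 0
  have small : ∀ ε > (0:ℝ), ∃ δ > (0:ℝ), ∀ h ∈ Icc (0:ℝ) 1, |h| < δ → f h < ε := by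
    intro ε hε
    rw [Metric.continuousWithinAt_iff] at hcont
    obtain ⟨δ, hδ, hd⟩ := hcont ε hε
    refine ⟨δ, hδ, fun h hh hlt => ?_⟩
    have := hd hh (by simpa [Real.dist_eq] using hlt)
    rw [Real.dist_eq, hf0, sub_zero] at this
    calc f h ≤ |f h| := le_abs_self _
    _ < ε := this
  constructor
  · -- openness
    have key2 : ∀ x ∈ Icc (0:ℝ) 1, 0 < f x → ∃ δ > (0:ℝ), ∀ y ∈ Icc (0:ℝ) 1,
        |y - x| < δ → 0 < f y := by
      intro x hx hfx
      obtain ⟨δ, hδ, hs⟩ := small (f x / (2 * C)) (by positivity)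
      refine ⟨δ, hδ, fun y hy hlt => ?_⟩
      have habs : |x - y| ∈ Icc (0:ℝ) 1 := by
        constructor
        · exact abs_nonneg _
        · rw [abs_le]
          constructor <;> linarith [hx.1, hx.2, hy.1, hy.2]
      have h1 : f x ≤ C * (f y + f |x - y|) := key y hy x hx
      have h2 : f |x - y| < f x / (2 * C) := hs _ habs (by rw [abs_abs, abs_sub_comm]; exact hlt)
      have h3 : C * f |x - y| < f x / 2 := by
        calc C * f |x - y| < C * (f x / (2 * C)) := by
              exact mul_lt_mul_of_pos_left h2 hCpos
          _ = f x / 2 := by field_simp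
      have h1' : f x ≤ C * f y + C * f |x - y| := by rw [mul_add] at h1; exact h1
      nlinarith [hnn y hy]
    choose! δ hδpos hδ using key2
    refine ⟨⋃ x ∈ {x ∈ Icc (0:ℝ) 1 | 0 < f x}, Metric.ball x (δ x), ?_, ?_⟩
    · exact isOpen_biUnion fun _ _ => Metric.isOpen_ball
    · ext y
      simp only [mem_setOf_eq, mem_inter_iff, mem_iUnion, Metric.mem_ball, exists_prop]
      constructor
      · rintro ⟨hy, hfy⟩
        exact ⟨⟨y, ⟨⟨hy, hfy⟩, by simpa using hδpos y hy hfy⟩⟩, hy⟩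
      · rintro ⟨⟨x, ⟨⟨hx, hfx⟩, hdist⟩⟩, hy⟩
        exact ⟨hy, hδ x hx hfx y hy (by simpa [Real.dist_eq] using hdist)⟩
  · -- continuity at zero points
    intro x hx hfx
    rw [Metric.continuousWithinAt_iff]
    intro ε hε
    obtain ⟨δ, hδ, hs⟩ := small (ε / C) (by positivity)
    refine ⟨δ, hδ, fun y hy hdist => ?_⟩
    have habs : |y - x| ∈ Icc (0:ℝ) 1 := by
      constructor
      · exact abs_nonneg _
      · rw [abs_le]
        constructor <;> linarith [hx.1, hx.2, hy.1, hy.2]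
    have h1 : f y ≤ C * (f x + f |y - x|) := key x hx y hy
    have h2 : f |y - x| < ε / C := hs _ habs (by rw [abs_abs]; simpa [Real.dist_eq] using hdist)
    rw [Real.dist_eq]
    have hny := hnn y hy
    rw [abs_of_nonneg (by linarith [hnn x hx] : (0:ℝ) ≤ f y - f x)]
    have h1' : f y ≤ C * f |y - x| := by rw [hfx] at h1; rw [mul_add] at h1; linarith
    have h3 : C * f |y - x| < ε := by
      calc C * f |y - x| < C * (ε / C) := mul_lt_mul_of_pos_left h2 hCpos
        _ = ε := by field_simp
    linarith
end

section
/- Let G ⊆ [0,1] be a set such that 0 is an accumulation point of V(G) = ⋃{U open : G ∩ U is comeager in U}, and G is a comeager G_δ subset of V(G). Then there exists a nonempty perfect set P ⊆ [0,1] such that |y − x| ∈ G for all distinct x, y ∈ P. -/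
open Set Finset Filter

/-- Signed coefficients. -/
def IsSgn (c : ℕ → ℝ) : Prop := ∀ i, c i = -1 ∨ c i = 0 ∨ c i = 1

lemma IsSgn.abs_le {c : ℕ → ℝ} (hc : IsSgn c) (i : ℕ) : |c i| ≤ 1 := by
  rcases hc i with h | h | h <;> rw [h] <;> norm_num

lemma meagre_preimage_add (t : ℝ) {s : Set ℝ} (h : IsMeagre s) :
    IsMeagre ((fun x => t + x) ⁻¹' s) :=
  h.preimage_of_isOpenMap (continuous_add_left t) (Homeomorph.addLeft t).isOpenMap

lemma meagre_preimage_sub (t : ℝ) {s : Set ℝ} (h : IsMeagre s) :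
    IsMeagre ((fun x => t - x) ⁻¹' s) :=
  h.preimage_of_isOpenMap (continuous_sub_left t) (isOpenMap_sub_left t)

lemma exists_ball_radius {F U : Set ℝ} (hF : F.Finite) (hU : IsOpen U) (hFU : F ⊆ U) :
    ∃ ρ > (0:ℝ), ∀ t ∈ F, Metric.ball t ρ ⊆ U := by
  obtain ⟨δ, hδ, hth⟩ := hF.isCompact.exists_thickening_subset_open hU hFU
  exact ⟨δ, hδ, fun t ht x hx => hth (Metric.mem_thickening_iff.2 ⟨t, ht, hx⟩)⟩

/-- The key Baire category step. -/
lemma baire_step (G VG : Set ℝ) (hVGopen : IsOpen VG) (hsub : G ⊆ VG)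
    (hcom : IsMeagre (VG \ G))
    (hacc : ∀ ε > (0:ℝ), ∃ x ∈ VG, 0 < x ∧ x < ε)
    (T : Set ℝ) (hTfin : T.Finite) (hTG : T ⊆ G) {ε : ℝ} (hε : 0 < ε) :
    ∃ x, 0 < x ∧ x < ε ∧ x ∈ G ∧ ∀ t ∈ T, t + x ∈ G ∧ t - x ∈ G := by
  obtain ⟨ρ, hρ, hballs⟩ := exists_ball_radius hTfin hVGopen (hTG.trans hsub)
  obtain ⟨v, hvVG, hv0, hvlt⟩ := hacc (min ρ ε) (lt_min hρ hε)
  obtain ⟨η, hη, hηsub⟩ := Metric.isOpen_iff.1 hVGopen v hvVG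
  set η' : ℝ := min η (min v (min (ρ - v) (ε - v))) with hη'def
  have hvρ : v < ρ := lt_of_lt_of_le hvlt (min_le_left _ _)
  have hvε : v < ε := lt_of_lt_of_le hvlt (min_le_right _ _)
  have hη' : 0 < η' := by
    apply lt_min hη
    apply lt_min hv0
    apply lt_min <;> linarith
  have hJVG : Metric.ball v η' ⊆ VG := fun x hx =>
    hηsub (Metric.ball_subset_ball (min_le_left _ _) hx)
  have hJprop : ∀ x ∈ Metric.ball v η', 0 < x ∧ x < ρ ∧ x < ε := by
    intro x hx
    rw [Metric.mem_ball, Real.dist_eq] at hx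
    have h1 : η' ≤ v := le_trans (min_le_right _ _) (min_le_left _ _)
    have h2 : η' ≤ ρ - v := le_trans (min_le_right _ _)
      (le_trans (min_le_right _ _) (min_le_left _ _))
    have h3 : η' ≤ ε - v := le_trans (min_le_right _ _)
      (le_trans (min_le_right _ _) (min_le_right _ _))
    have := abs_lt.1 hx
    constructor
    · linarith [this.1]
    constructor <;> linarith [this.2]
  -- the meagre set to avoid
  set M : Set ℝ := (VG \ G) ∪ ⋃ t ∈ T, ((fun x => t + x) ⁻¹' (VG \ G) ∪
      (fun x => t - x) ⁻¹' (VG \ G)) with hMdef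
  have hM : IsMeagre M := by
    have h1 : IsMeagre (⋃ t ∈ T, ((fun x => t + x) ⁻¹' (VG \ G) ∪
        (fun x => t - x) ⁻¹' (VG \ G))) := by
      rw [IsMeagre, compl_iUnion₂]
      exact (countable_bInter_mem hTfin.countable).2 fun t ht => by
        rw [compl_union]
        exact Filter.inter_mem (meagre_preimage_add t hcom) (meagre_preimage_sub t hcom)
    rw [IsMeagre, hMdef, compl_union]
    exact Filter.inter_mem hcom h1
  have hdense : Dense Mᶜ := dense_of_mem_residual hM
  obtain ⟨x, hxM, hxJ⟩ := hdense.exists_mem_open Metric.isOpen_ball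
    ⟨v, Metric.mem_ball_self hη'⟩
  obtain ⟨hx0, hxρ, hxε⟩ := hJprop x hxJ
  rw [hMdef, compl_union, mem_inter_iff, compl_iUnion₂] at hxM
  obtain ⟨hx1, hx2⟩ := hxM
  have hxG : x ∈ G := by
    by_contra hxG
    exact hx1 ⟨hJVG hxJ, hxG⟩
  refine ⟨x, hx0, hxε, hxG, fun t ht => ?_⟩
  have hxt := mem_iInter₂.1 hx2 t ht
  rw [compl_union, mem_inter_iff] at hxt
  have hplus : t + x ∈ VG := hballs t ht (by
    rw [Metric.mem_ball, Real.dist_eq]; rw [abs_of_pos] <;> linarith)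
  have hminus : t - x ∈ VG := hballs t ht (by
    rw [Metric.mem_ball, Real.dist_eq]
    have : t - x - t = -x := by ring
    rw [this, abs_neg, abs_of_pos] <;> linarith)
  constructor
  · by_contra h
    exact hxt.1 ⟨hplus, h⟩
  · by_contra h
    exact hxt.2 ⟨hminus, h⟩



section arith
variable {f : ℕ → ℝ} {n : ℕ}

lemma f_anti (hpos : ∀ i ≤ n, 0 < f i) (hrat : ∀ i, i + 1 ≤ n → 3 * f (i+1) ≤ f i) :
    ∀ i j, i ≤ j → j ≤ n → f j ≤ f i := by
  intro i j hij
  induction j, hij using Nat.le_induction with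
  | base => intro _; exact le_refl _
  | succ j hj ih =>
    intro hjn
    have h1 : 3 * f (j+1) ≤ f j := hrat j hjn
    have h2 : 0 < f (j+1) := hpos _ hjn
    have := ih (by omega)
    linarith

lemma geom_partial (hpos : ∀ i ≤ n, 0 < f i) (hrat : ∀ i, i + 1 ≤ n → 3 * f (i+1) ≤ f i) :
    ∀ j m, m ≤ n → m + j ≤ n + 1 → ∑ i ∈ Finset.range j, f (m + i) ≤ 3/2 * f m := by
  intro j
  induction j with
  | zero => intro m hm _; simpa using by linarith [hpos m hm]
  | succ j ih =>
    intro m hm hmj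
    rw [Finset.sum_range_succ']
    simp only [Nat.add_zero]
    rcases Nat.eq_zero_or_pos j with rfl | hj
    · simpa using by linarith [hpos m hm]
    · have hm1 : m + 1 ≤ n := by omega
      have h1 : ∑ i ∈ Finset.range j, f (m + (i + 1)) ≤ 3/2 * f (m+1) := by
        have h0 := ih (m+1) hm1 (by omega)
        have he : ∑ i ∈ Finset.range j, f (m + (i + 1))
            = ∑ i ∈ Finset.range j, f (m + 1 + i) :=
          Finset.sum_congr rfl fun i _ => by rw [Nat.add_comm i 1, ← Nat.add_assoc]
        rw [he]; exact h0
      have h2 : 3 * f (m+1) ≤ f m := hrat m hm1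
      have h3 : 0 < f (m+1) := hpos _ hm1
      linarith

lemma geom_Ico (hpos : ∀ i ≤ n, 0 < f i) (hrat : ∀ i, i + 1 ≤ n → 3 * f (i+1) ≤ f i)
    {m : ℕ} (hm : m ≤ n) : ∑ i ∈ Finset.Ico (m+1) (n+1), f i ≤ f m / 2 := by
  rcases Nat.eq_or_lt_of_le hm with rfl | hmn
  · simp; linarith [hpos m hm]
  · have hm1 : m + 1 ≤ n := hmn
    have := geom_partial hpos hrat (n - m) (m+1) hm1 (by omega)
    have heq : ∑ i ∈ Finset.Ico (m+1) (n+1), f i = ∑ i ∈ Finset.range (n - m), f (m + 1 + i) := by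
      rw [Finset.sum_Ico_eq_sum_range, Nat.succ_sub_succ]
    rw [heq]
    have h2 : 3 * f (m+1) ≤ f m := hrat m hm1
    have h3 : 0 < f (m+1) := hpos _ hm1
    linarith

lemma sgn_sum_lower (hpos : ∀ i ≤ n, 0 < f i) (hrat : ∀ i, i + 1 ≤ n → 3 * f (i+1) ≤ f i)
    {c : ℕ → ℝ} (hc : IsSgn c) {m : ℕ} (hm : m ≤ n) (hcm : c m ≠ 0) :
    f n / 2 ≤ |∑ i ∈ Finset.range (n+1), c i * f i| := by
  classical
  have hex : ∃ i, c i ≠ 0 := ⟨m, hcm⟩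
  set m0 := Nat.find hex with hm0def
  have hcm0 : c m0 ≠ 0 := Nat.find_spec hex
  have hm0le : m0 ≤ m := Nat.find_min' hex hcm
  have hm0n : m0 ≤ n := le_trans hm0le hm
  have hzero : ∀ i < m0, c i = 0 := fun i hi => by
    by_contra h; exact absurd (Nat.find_min' hex h) (by omega)
  -- split the sum
  have hsplit : ∑ i ∈ Finset.range (n+1), c i * f i
      = c m0 * f m0 + ∑ i ∈ Finset.Ico (m0+1) (n+1), c i * f i := by
    rw [Finset.range_eq_Ico, ← Finset.sum_Ico_consecutive _ (Nat.zero_le m0) (by omega : m0 ≤ n+1),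
      Finset.sum_eq_sum_Ico_succ_bot (by omega : m0 < n + 1)]
    have : ∑ i ∈ Finset.Ico 0 m0, c i * f i = 0 :=
      Finset.sum_eq_zero fun i hi => by
        rw [hzero i (Finset.mem_Ico.1 hi).2]; ring
    rw [this]; ring
  have habs : |c m0| = 1 := by
    rcases hc m0 with h | h | h
    · rw [h]; norm_num
    · exact absurd h hcm0
    · rw [h]; norm_num
  have hR : |∑ i ∈ Finset.Ico (m0+1) (n+1), c i * f i| ≤ f m0 / 2 := by
    calc |∑ i ∈ Finset.Ico (m0+1) (n+1), c i * f i|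
        ≤ ∑ i ∈ Finset.Ico (m0+1) (n+1), |c i * f i| := Finset.abs_sum_le_sum_abs _ _
      _ ≤ ∑ i ∈ Finset.Ico (m0+1) (n+1), f i := by
          apply Finset.sum_le_sum
          intro i hi
          have hi' : i ≤ n := by have := (Finset.mem_Ico.1 hi).2; omega
          rw [abs_mul, abs_of_pos (hpos i hi')]
          calc |c i| * f i ≤ 1 * f i := by
                apply mul_le_mul_of_nonneg_right (hc.abs_le i) (hpos i hi').le
            _ = f i := one_mul _
      _ ≤ f m0 / 2 := geom_Ico hpos hrat hm0n
  have hfm0 : |c m0 * f m0| = f m0 := by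
    rw [abs_mul, habs, one_mul, abs_of_pos (hpos m0 hm0n)]
  have hmono : f n ≤ f m0 := f_anti hpos hrat m0 n hm0n le_rfl
  calc f n / 2 ≤ f m0 / 2 := by linarith
    _ ≤ |c m0 * f m0| - |∑ i ∈ Finset.Ico (m0+1) (n+1), c i * f i| := by
        rw [hfm0]; linarith
    _ ≤ |c m0 * f m0 + ∑ i ∈ Finset.Ico (m0+1) (n+1), c i * f i| := by
        have := abs_add_le (c m0 * f m0 + ∑ i ∈ Finset.Ico (m0+1) (n+1), c i * f i)
          (-(∑ i ∈ Finset.Ico (m0+1) (n+1), c i * f i))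
        simp only [add_neg_cancel_right, abs_neg] at this
        linarith
    _ = |∑ i ∈ Finset.range (n+1), c i * f i| := by rw [hsplit]

end arith




/-- The invariant maintained along the construction. -/
structure SInv (G : Set ℝ) (W : ℕ → Set ℝ) (n : ℕ) (f : ℕ → ℝ) : Prop where
  small : f 0 < 1/3
  pos : ∀ i ≤ n, 0 < f i
  rat : ∀ i, i + 1 ≤ n → 3 * f (i+1) ≤ f i
  mem : ∀ c : ℕ → ℝ, IsSgn c → (∃ i ≤ n, c i ≠ 0) →
    |∑ i ∈ Finset.range (n+1), c i * f i| ∈ G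
  ball : ∀ j, j + 1 ≤ n → ∀ k ≤ j, ∀ c : ℕ → ℝ, IsSgn c → (∃ i ≤ j, c i ≠ 0) →
    Metric.ball (|∑ i ∈ Finset.range (j+1), c i * f i|) (2 * f (j+1)) ⊆ W k

lemma sums_finite (f : ℕ → ℝ) (n : ℕ) :
    {s : ℝ | ∃ c : ℕ → ℝ, IsSgn c ∧ s = |∑ i ∈ Finset.range (n+1), c i * f i|}.Finite := by
  have hfin : ((fun d : Fin (n+1) → ℝ => |∑ i, d i * f i|) ''
      (Set.pi Set.univ fun _ => ({-1,0,1} : Set ℝ))).Finite := by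
    apply Set.Finite.image
    apply Set.Finite.pi
    intro _
    exact (Set.finite_singleton (1:ℝ)).insert 0 |>.insert (-1)
  apply hfin.subset
  rintro s ⟨c, hc, rfl⟩
  refine ⟨fun i => c i, fun i _ => ?_, ?_⟩
  · rcases hc i with h | h | h <;> simp [h]
  · simp only
    rw [Fin.sum_univ_eq_sum_range (fun i => c i * f i) (n+1)]

lemma step_exists (G VG : Set ℝ) (W : ℕ → Set ℝ) (hWopen : ∀ k, IsOpen (W k))
    (hGW : ∀ k, G ⊆ W k)
    (hVGopen : IsOpen VG) (hsub : G ⊆ VG) (hcom : IsMeagre (VG \ G))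
    (hacc : ∀ ε > (0:ℝ), ∃ x ∈ VG, 0 < x ∧ x < ε)
    (n : ℕ) (f : ℕ → ℝ) (h : SInv G W n f) :
    ∃ y : ℝ, SInv G W (n+1) (Function.update f (n+1) y) := by
  classical
  set T : Set ℝ := {s : ℝ | ∃ c : ℕ → ℝ, IsSgn c ∧ (∃ i ≤ n, c i ≠ 0) ∧
    s = |∑ i ∈ Finset.range (n+1), c i * f i|} with hTdef
  have hTG : T ⊆ G := by rintro s ⟨c, hc, hw, rfl⟩; exact h.mem c hc hw
  have hTfin : T.Finite := (sums_finite f n).subset (by rintro s ⟨c, hc, _, hs⟩; exact ⟨c, hc, hs⟩)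
  have hU : IsOpen (⋂ k ∈ Finset.range (n+1), W k) := isOpen_biInter_finset fun k _ => hWopen k
  have hTU : T ⊆ ⋂ k ∈ Finset.range (n+1), W k := fun s hs =>
    mem_iInter₂.2 fun k _ => hGW k (hTG hs)
  obtain ⟨δ, hδ, hballs⟩ := exists_ball_radius hTfin hU hTU
  have hfn : 0 < f n := h.pos n le_rfl
  have hε : 0 < min (f n / 3) (δ / 2) := lt_min (by linarith) (by linarith)
  obtain ⟨y, hy0, hylt, hyG, hyT⟩ := baire_step G VG hVGopen hsub hcom hacc T hTfin hTG hε
  have hy3 : 3 * y ≤ f n := by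
    have := lt_of_lt_of_le hylt (min_le_left _ _); linarith
  have hyδ : 2 * y < δ := by
    have := lt_of_lt_of_le hylt (min_le_right _ _); linarith
  have hupne : ∀ i, i ≠ n+1 → Function.update f (n+1) y i = f i :=
    fun i hi => Function.update_of_ne hi y f
  have hupeq : Function.update f (n+1) y (n+1) = y := Function.update_self (n+1) y f
  have hsum_eq : ∀ m, m ≤ n → ∀ c : ℕ → ℝ,
      ∑ i ∈ Finset.range (m+1), c i * Function.update f (n+1) y i
        = ∑ i ∈ Finset.range (m+1), c i * f i := by
    intro m hm c
    refine Finset.sum_congr rfl fun i hi => ?_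
    rw [hupne i (by have := Finset.mem_range.1 hi; omega)]
  refine ⟨y, ?_, ?_, ?_, ?_, ?_⟩
  · rw [hupne 0 (by omega)]; exact h.small
  · intro i hi
    rcases eq_or_ne i (n+1) with rfl | hne
    · rw [hupeq]; exact hy0
    · rw [hupne i hne]; exact h.pos i (by omega)
  · intro i hi
    rcases eq_or_ne i n with rfl | hne
    · rw [hupeq, hupne i (by omega)]; linarith
    · rw [hupne (i+1) (by omega), hupne i (by omega)]; exact h.rat i (by omega)
  · intro c hc hw
    obtain ⟨i0, hi0, hci0⟩ := hw
    rw [Finset.sum_range_succ, hsum_eq n le_rfl c, hupeq]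
    set t0 := ∑ i ∈ Finset.range (n+1), c i * f i with ht0
    by_cases hwit : ∃ i ≤ n, c i ≠ 0
    · have ht0G : |t0| ∈ G := h.mem c hc hwit
      have ht0T : |t0| ∈ T := ⟨c, hc, hwit, rfl⟩
      obtain ⟨hplus, hminus⟩ := hyT _ ht0T
      obtain ⟨m, hm, hcm⟩ := hwit
      have hlow : f n / 2 ≤ |t0| := sgn_sum_lower h.pos h.rat hc hm hcm
      have hyl : y < |t0| := by linarith
      have ht0ne : t0 ≠ 0 := by
        intro hz; rw [hz, abs_zero] at hlow; linarith
      rcases lt_or_gt_of_ne ht0ne with hneg | hpos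
      · have habs : |t0| = -t0 := abs_of_neg hneg
        rcases hc (n+1) with hcn | hcn | hcn
        · rw [hcn]
          have he : |t0 + (-1) * y| = |t0| + y := by
            rw [abs_of_neg (by nlinarith : t0 + (-1) * y < 0)]; rw [habs]; ring
          rw [he]; exact hplus
        · rw [hcn]
          have he : t0 + 0 * y = t0 := by ring
          rw [he]; exact ht0G
        · rw [hcn]
          have he : |t0 + 1 * y| = |t0| - y := by
            rw [abs_of_neg (by nlinarith : t0 + 1 * y < 0)]; rw [habs]; ring
          rw [he]; exact hminus
      · have habs : |t0| = t0 := abs_of_pos hpos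
        rcases hc (n+1) with hcn | hcn | hcn
        · rw [hcn]
          have he : |t0 + (-1) * y| = |t0| - y := by
            rw [abs_of_pos (by nlinarith : 0 < t0 + (-1) * y)]; rw [habs]; ring
          rw [he]; exact hminus
        · rw [hcn]
          have he : t0 + 0 * y = t0 := by ring
          rw [he]; exact ht0G
        · rw [hcn]
          have he : |t0 + 1 * y| = |t0| + y := by
            rw [abs_of_pos (by nlinarith : 0 < t0 + 1 * y)]; rw [habs]; ring
          rw [he]; exact hplus
    · push_neg at hwit
      have ht00 : t0 = 0 := Finset.sum_eq_zero fun i hi => by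
        rw [hwit i (by have := Finset.mem_range.1 hi; omega)]; ring
      have hcn1 : c (n+1) ≠ 0 := by
        rcases Nat.lt_succ_iff_lt_or_eq.1 (Nat.lt_succ_of_le hi0) with hlt | heq
        · exact absurd (hwit i0 (by omega)) hci0
        · rwa [heq] at hci0
      rcases hc (n+1) with hcn | hcn | hcn
      · rw [ht00, hcn]
        have he : (0:ℝ) + (-1) * y = -y := by ring
        rw [he, abs_neg, abs_of_pos hy0]; exact hyG
      · exact absurd hcn hcn1
      · rw [ht00, hcn]
        have he : (0:ℝ) + 1 * y = y := by ring
        rw [he, abs_of_pos hy0]; exact hyG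
  · intro j hj k hk c hc hw
    rcases Nat.lt_or_ge j n with hlt | hge
    · rw [hsum_eq j (by omega) c, hupne (j+1) (by omega)]
      exact h.ball j (by omega) k hk c hc hw
    · have hjn : j = n := by omega
      subst hjn
      rw [hsum_eq j le_rfl c, hupeq]
      have ht0T : |∑ i ∈ Finset.range (j+1), c i * f i| ∈ T := ⟨c, hc, hw, rfl⟩
      refine subset_trans (Metric.ball_subset_ball (by linarith : 2 * y ≤ δ)) ?_
      intro z hz
      exact mem_iInter₂.1 (hballs _ ht0T hz) k (Finset.mem_range.2 (by omega))

lemma base_exists (G VG : Set ℝ) (W : ℕ → Set ℝ)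
    (hVGopen : IsOpen VG) (hsub : G ⊆ VG) (hcom : IsMeagre (VG \ G))
    (hacc : ∀ ε > (0:ℝ), ∃ x ∈ VG, 0 < x ∧ x < ε) :
    ∃ f : ℕ → ℝ, SInv G W 0 f := by
  obtain ⟨x0, h0, hlt, hG, -⟩ := baire_step G VG hVGopen hsub hcom hacc ∅ finite_empty
    (empty_subset _) (by norm_num : (0:ℝ) < 1/4)
  refine ⟨fun _ => x0, by norm_num; linarith, fun i _ => h0, fun i hi => by omega, ?_,
    fun j hj => by omega⟩
  intro c hc hw
  obtain ⟨i, hi, hci⟩ := hw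
  have hi0 : i = 0 := Nat.le_zero.1 hi
  subst hi0
  rw [Finset.sum_range_one]
  rcases hc 0 with h | h | h
  · rw [h]
    have he : (-1 : ℝ) * x0 = -x0 := by ring
    rw [he, abs_neg, abs_of_pos h0]; exact hG
  · exact absurd h hci
  · rw [h, one_mul, abs_of_pos h0]; exact hG





set_option maxHeartbeats 1000000 in
/-- Existence of a perfect set whose distance set lies in `G` (Lemma dis). -/
theorem stmt8 (G : Set ℝ) (hG : G ⊆ Icc (0:ℝ) 1)
    (VG : Set ℝ) (hVG : VG = ⋃₀ {U : Set ℝ | IsOpen U ∧ IsMeagre (U \ G)})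
    (hacc : ∀ ε > (0:ℝ), ∃ x ∈ VG, 0 < x ∧ x < ε)
    (hGδ : IsGδ G) (hsub : G ⊆ VG) (hcom : IsMeagre (VG \ G)) :
    ∃ P : Set ℝ, P ⊆ Icc (0:ℝ) 1 ∧ P.Nonempty ∧ Perfect P ∧
      ∀ x ∈ P, ∀ y ∈ P, x ≠ y → |y - x| ∈ G := by
  classical
  have hVGopen : IsOpen VG := by
    rw [hVG]; exact isOpen_sUnion fun U hU => hU.1
  obtain ⟨W, hWopen, hGeq⟩ := hGδ.eq_iInter_nat
  have hGW : ∀ k, G ⊆ W k := fun k => by rw [hGeq]; exact iInter_subset W k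
  obtain ⟨f0, hf0⟩ := base_exists G VG W hVGopen hsub hcom hacc
  have hstep : ∀ n (f : ℕ → ℝ), SInv G W n f →
      ∃ y, SInv G W (n+1) (Function.update f (n+1) y) :=
    fun n f h => step_exists G VG W hWopen hGW hVGopen hsub hcom hacc n f h
  let F : (n : ℕ) → {f : ℕ → ℝ // SInv G W n f} := fun n =>
    Nat.rec ⟨f0, hf0⟩ (fun n p => ⟨Function.update p.1 (n+1) (hstep n p.1 p.2).choose,
      (hstep n p.1 p.2).choose_spec⟩) n
  let x : ℕ → ℝ := fun n => (F n).1 n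
  have hFsucc : ∀ n, (F (n+1)).1
      = Function.update (F n).1 (n+1) (hstep n (F n).1 (F n).2).choose := fun n => rfl
  have hagree : ∀ n m, n ≤ m → (F m).1 n = x n := by
    intro n m hnm
    induction m, hnm using Nat.le_induction with
    | base => rfl
    | succ m hm ih =>
      rw [hFsucc m, Function.update_of_ne (by omega : n ≠ m+1)]
      exact ih
  have hpos : ∀ n, 0 < x n := fun n => (F n).2.pos n le_rfl
  have hrat : ∀ n, 3 * x (n+1) ≤ x n := by
    intro n
    have h1 := (F (n+1)).2.rat n le_rfl
    rwa [hagree n (n+1) (by omega)] at h1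
  have hsmall : x 0 < 1/3 := (F 0).2.small
  have hsum_eq : ∀ (n m : ℕ), n ≤ m → ∀ (c : ℕ → ℝ),
      ∑ i ∈ Finset.range (n+1), c i * (F m).1 i = ∑ i ∈ Finset.range (n+1), c i * x i :=
    fun n m hnm c => Finset.sum_congr rfl fun i hi => by
      rw [hagree i m (by have := Finset.mem_range.1 hi; omega)]
  have hmem : ∀ (n : ℕ) (c : ℕ → ℝ), IsSgn c → (∃ i ≤ n, c i ≠ 0) →
      |∑ i ∈ Finset.range (n+1), c i * x i| ∈ G := by
    intro n c hc hw
    have h1 := (F n).2.mem c hc hw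
    rwa [hsum_eq n n le_rfl c] at h1
  have hball : ∀ n k, k ≤ n → ∀ c : ℕ → ℝ, IsSgn c → (∃ i ≤ n, c i ≠ 0) →
      Metric.ball (|∑ i ∈ Finset.range (n+1), c i * x i|) (2 * x (n+1)) ⊆ W k := by
    intro n k hk c hc hw
    have h1 := (F (n+1)).2.ball n le_rfl k hk c hc hw
    rwa [hsum_eq n (n+1) (by omega) c] at h1
  clear hFsucc hagree hsum_eq
  clear_value x F
  clear F f0 hf0 hstep
  -- summability and tail bounds
  have hxle : ∀ m i, x (i + m) ≤ x m * (1/3)^i := by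
    intro m i
    induction i with
    | zero => simp
    | succ i ih =>
      have h1 := hrat (i + m)
      have h2 := hpos (i + m + 1)
      have he : i + 1 + m = (i + m) + 1 := by omega
      rw [he]
      calc x ((i+m)+1) ≤ x (i+m) / 3 := by linarith
        _ ≤ (x m * (1/3)^i) / 3 := by linarith
        _ = x m * (1/3)^(i+1) := by ring
  have hgeo : Summable (fun i : ℕ => x 0 * (1/3)^i) :=
    (summable_geometric_of_lt_one (by norm_num) (by norm_num)).mul_left (x 0)
  have hsumx : Summable x := by
    apply Summable.of_nonneg_of_le (fun n => (hpos n).le) (fun n => ?_) hgeo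
    simpa using hxle 0 n
  have hsumtail : ∀ m, Summable (fun i => x (i + m)) := fun m =>
    (summable_nat_add_iff m).2 hsumx
  have htail : ∀ m, (∑' i, x (i + m)) ≤ 3/2 * x m := by
    intro m
    have h1 : ∑' i, x (i + m) ≤ ∑' i : ℕ, x m * (1/3)^i :=
      Summable.tsum_le_tsum (fun i => hxle m i) (hsumtail m)
        ((summable_geometric_of_lt_one (by norm_num) (by norm_num)).mul_left (x m))
    rw [tsum_mul_left, tsum_geometric_of_lt_one (by norm_num) (by norm_num)] at h1
    norm_num at h1
    linarith
  -- the map from Cantor space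
  let g : (ℕ → Bool) → ℕ → ℝ := fun σ n => if σ n then x n else 0
  have hg0 : ∀ σ n, 0 ≤ g σ n := by
    intro σ n; by_cases h : σ n <;> simp [g, h, (hpos n).le]
  have hgx : ∀ σ n, g σ n ≤ x n := by
    intro σ n; by_cases h : σ n <;> simp [g, h, (hpos n).le]
  have hsg : ∀ σ, Summable (g σ) := fun σ =>
    Summable.of_nonneg_of_le (hg0 σ) (hgx σ) hsumx
  let hfun : (ℕ → Bool) → ℝ := fun σ => ∑' n, g σ n
  have hcont : Continuous hfun := by
    apply continuous_tsum (fun n => ?_) hsumx (fun n σ => ?_)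
    · exact (continuous_of_discreteTopology :
        Continuous (fun b : Bool => if b then x n else 0)).comp (continuous_apply n)
    · rw [Real.norm_eq_abs, abs_of_nonneg (hg0 σ n)]; exact hgx σ n
  refine ⟨Set.range hfun, ?_, ⟨hfun (fun _ => false), ⟨_, rfl⟩⟩, ⟨?_, ?_⟩, ?_⟩
  · -- ⊆ Icc 0 1
    rintro p ⟨σ, rfl⟩
    constructor
    · exact tsum_nonneg (hg0 σ)
    · have h1 : hfun σ ≤ ∑' n, x n := Summable.tsum_le_tsum (hgx σ) (hsg σ) hsumx
      have h2 : (∑' n, x n) ≤ 3/2 * x 0 := by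
        have := htail 0; simpa using this
      have := hpos 0
      calc hfun σ ≤ 3/2 * x 0 := le_trans h1 h2
        _ ≤ 1 := by linarith
  · -- closed
    exact (isCompact_range hcont).isClosed
  · -- preperfect
    rw [preperfect_iff_nhds]
    rintro p ⟨σ, rfl⟩ U hU
    obtain ⟨ε, hε, hballU⟩ := Metric.mem_nhds_iff.1 hU
    obtain ⟨n, hn⟩ := (hsumx.tendsto_atTop_zero.eventually_lt_const hε).exists
    set σ' := Function.update σ n (!σ n) with hσ'
    have hdiff : hfun σ' - hfun σ = g σ' n - g σ n := by
      rw [← Summable.tsum_sub (hsg σ') (hsg σ)]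
      exact tsum_eq_single n fun k hk => by
        simp only [g, hσ', Function.update_of_ne hk, sub_self]
    have hval : |hfun σ' - hfun σ| = x n := by
      rw [hdiff]
      have hupd : σ' n = !σ n := Function.update_self n (!σ n) σ
      by_cases h : σ n
      · rw [show g σ' n = 0 from by simp [g, hupd, h],
          show g σ n = x n from by simp [g, h]]
        simp [abs_of_pos (hpos n)]
      · rw [show g σ' n = x n from by simp [g, hupd, h],
          show g σ n = 0 from by simp [g, h]]
        simp [abs_of_pos (hpos n)]
    refine ⟨hfun σ', ⟨hballU ?_, ⟨σ', rfl⟩⟩, ?_⟩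
    · rw [Metric.mem_ball, Real.dist_eq, hval]; exact hn
    · intro hcontra
      rw [hcontra, sub_self, abs_zero] at hval
      exact absurd hval.symm (hpos n).ne'
  · -- distances in G
    rintro a ⟨σ, rfl⟩ b ⟨τ, rfl⟩ hne
    set c : ℕ → ℝ := fun n => (if τ n then (1:ℝ) else 0) - (if σ n then 1 else 0) with hcdef
    have hc : IsSgn c := by
      intro n; by_cases h1 : σ n <;> by_cases h2 : τ n <;> simp [c, h1, h2]
    have hcg : ∀ n, c n * x n = g τ n - g σ n := by
      intro n; by_cases h1 : σ n <;> by_cases h2 : τ n <;> simp [c, g, h1, h2] <;> ring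
    have hsummc : Summable (fun n => c n * x n) :=
      (((hsg τ).sub (hsg σ))).congr fun n => (hcg n).symm
    have hs : ∑' n, c n * x n = hfun τ - hfun σ := by
      rw [tsum_congr hcg, Summable.tsum_sub (hsg τ) (hsg σ)]
    have hm : ∃ m, c m ≠ 0 := by
      by_contra hall
      push_neg at hall
      apply hne
      have h0 : ∑' n, c n * x n = 0 := by
        rw [tsum_congr (fun n => by rw [hall n, zero_mul] : ∀ n, c n * x n = 0)]
        exact tsum_zero
      have := hs ▸ h0
      linarith [this]
    obtain ⟨m, hcm⟩ := hm
    have habsG : |∑' n, c n * x n| ∈ G := by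
      rw [hGeq]
      refine mem_iInter.2 fun k => ?_
      set n := max k m with hndef
      set t := ∑ i ∈ Finset.range (n+1), c i * x i with htdef
      have hsplit : t + ∑' i, c (i + (n+1)) * x (i + (n+1)) = ∑' n, c n * x n :=
        Summable.sum_add_tsum_nat_add (f := fun i => c i * x i) (n+1) hsummc
      have hsummtail : Summable (fun i => c (i + (n+1)) * x (i + (n+1))) :=
        (summable_nat_add_iff (f := fun j => c j * x j) (n+1)).2 hsummc
      have hRle : |∑' i, c (i + (n+1)) * x (i + (n+1))| ≤ 3/2 * x (n+1) := by
        have h1 : |∑' i, c (i + (n+1)) * x (i + (n+1))|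
            ≤ ∑' i, |c (i + (n+1)) * x (i + (n+1))| := by
          have h' : Summable (fun i => ‖c (i + (n+1)) * x (i + (n+1))‖) :=
            hsummtail.abs.congr fun i => (Real.norm_eq_abs _).symm
          have hn := norm_tsum_le_tsum_norm h'
          rw [Real.norm_eq_abs] at hn
          exact le_trans hn (le_of_eq (tsum_congr fun i => Real.norm_eq_abs _))
        have h2 : ∑' i, |c (i + (n+1)) * x (i + (n+1))| ≤ ∑' i, x (i + (n+1)) := by
          apply Summable.tsum_le_tsum _ hsummtail.abs (hsumtail (n+1))
          intro i
          rw [abs_mul, abs_of_pos (hpos _)]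
          calc |c (i + (n+1))| * x (i + (n+1)) ≤ 1 * x (i + (n+1)) := by
                apply mul_le_mul_of_nonneg_right _ (hpos _).le
                rcases hc (i + (n+1)) with h | h | h <;> rw [h] <;> norm_num
            _ = x (i + (n+1)) := one_mul _
        exact le_trans (le_trans h1 h2) (htail (n+1))
      have hdist : dist |∑' n, c n * x n| |t| < 2 * x (n+1) := by
        rw [Real.dist_eq]
        have h2 : |(∑' n, c n * x n) - t| ≤ 3/2 * x (n+1) := by
          rw [show (∑' n, c n * x n) - t = ∑' i, c (i + (n+1)) * x (i + (n+1)) from by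
            linarith [hsplit]]
          exact hRle
        have h3 := abs_abs_sub_abs_le_abs_sub (∑' n, c n * x n) t
        linarith [hpos (n+1)]
      exact hball n k (le_max_left _ _) c hc ⟨m, le_max_right _ _, hcm⟩
        (Metric.mem_ball.2 hdist)
    rwa [hs] at habsG
end

section
/- Let f : [0,1] → ℝ≥0 be a Borel function satisfying (R2) with constant C, and suppose f is not continuous at 0. Then there exists a > 0 such that 0 is an accumulation point of V(G) for G = {x ∈ [0,1] : f(x) > a}, where V(G) is the union of all open sets U in which G is comeager. -/
open Set Topology Filter

/-- If `f` is Borel, satisfies (R2) and is discontinuous at 0, then `0` is adherent to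
`V({f > a})` for some `a > 0` (Lemma dis1). -/
theorem stmt9 (f : ℝ → ℝ) (hmeas : Measurable f)
    (hnn : ∀ x ∈ Icc (0:ℝ) 1, 0 ≤ f x) (hf0 : f 0 = 0)
    (C : ℝ) (hC : 1 ≤ C)
    (hR2a : ∀ x ∈ Icc (0:ℝ) 1, ∀ y ∈ Icc (0:ℝ) 1, x + y ∈ Icc (0:ℝ) 1 →
      f (x + y) ≤ C * (f x + f y))
    (hR2b : ∀ x ∈ Icc (0:ℝ) 1, ∀ y ∈ Icc (0:ℝ) 1, x + y ∈ Icc (0:ℝ) 1 →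
      f x ≤ C * (f (x + y) + f y))
    (hdisc : ∃ b : ℝ, 0 < b ∧ ∀ ε > (0:ℝ), ∃ x ∈ Icc (0:ℝ) 1, 0 < x ∧ x < ε ∧ b < f x) :
    ∃ a : ℝ, 0 < a ∧ ∀ ε > (0:ℝ),
      ∃ x ∈ ⋃₀ {U : Set ℝ | IsOpen U ∧ IsMeagre (U \ {x ∈ Icc (0:ℝ) 1 | a < f x})},
        0 < x ∧ x < ε := by
  obtain ⟨b, hb, hbx⟩ := hdisc
  have hC0 : (0:ℝ) < C := lt_of_lt_of_le one_pos hC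
  set a : ℝ := b / (2 * C) with ha
  have ha0 : 0 < a := div_pos hb (by linarith)
  refine ⟨a, ha0, ?_⟩
  set G : Set ℝ := {x ∈ Icc (0:ℝ) 1 | a < f x} with hG
  -- G is Baire measurable; get an open set u with G =ᵇ u
  have hGmeas : MeasurableSet G := by
    have hGi : G = Icc (0:ℝ) 1 ∩ {x | a < f x} := rfl
    rw [hGi]
    exact measurableSet_Icc.inter (measurableSet_lt measurable_const hmeas)
  obtain ⟨u, hu_open, hGu⟩ := hGmeas.baireMeasurableSet.residualEq_isOpen
  have hW : {x : ℝ | x ∈ G ↔ x ∈ u} ∈ residual ℝ := eventuallyEq_set.mp hGu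
  have hsymm : IsMeagre {x : ℝ | ¬ (x ∈ G ↔ x ∈ u)} := by
    rw [IsMeagre]
    convert hW using 1
    ext x; simp
  intro ε hε
  set ε' : ℝ := min ε 1 with hε'
  have hε'0 : 0 < ε' := lt_min hε one_pos
  have hε'1 : ε' ≤ 1 := min_le_right _ _
  have hε'ε : ε' ≤ ε := min_le_left _ _
  by_cases hcase : ∃ x ∈ u, 0 < x ∧ x < ε'
  · obtain ⟨x, hxu, hx0, hxε⟩ := hcase
    refine ⟨x, ?_, hx0, lt_of_lt_of_le hxε hε'ε⟩
    refine ⟨u, ⟨hu_open, hsymm.mono ?_⟩, hxu⟩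
    intro z hz
    simp only [mem_setOf_eq]
    intro h
    exact hz.2 (h.mpr hz.1)
  · push_neg at hcase
    obtain ⟨x₀, hx₀I, hx₀0, hx₀ε, hx₀f⟩ := hbx (ε'/2) (by linarith)
    -- translated meagre set
    have hM' : IsMeagre ((fun z : ℝ => z - x₀) ⁻¹' {x : ℝ | ¬ (x ∈ G ↔ x ∈ u)}) :=
      hsymm.preimage_of_isOpenMap (continuous_sub_right x₀)
        ((Homeomorph.subRight x₀).isOpenMap)
    set U : Set ℝ := Ioo x₀ (x₀ + ε'/2) with hU
    have hUG : U \ G ⊆ (fun z : ℝ => z - x₀) ⁻¹' {x : ℝ | ¬ (x ∈ G ↔ x ∈ u)} := by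
      rintro z ⟨⟨hz1, hz2⟩, hzG⟩
      simp only [mem_preimage, mem_setOf_eq]
      intro h
      set y : ℝ := z - x₀ with hy
      have hy0 : 0 < y := by simp [hy]; linarith
      have hyε : y < ε'/2 := by simp [hy]; linarith
      -- y ∉ G, since otherwise y ∈ G ∩ Ioo 0 ε' contradicting hcase
      have hyG : y ∉ G := by
        intro hyG
        exact hcase y (h.mp hyG) hy0 |>.not_gt (by linarith)
      have hyI : y ∈ Icc (0:ℝ) 1 := ⟨le_of_lt hy0, by linarith⟩
      have hyfa : f y ≤ a := by
        by_contra hfa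
        exact hyG ⟨hyI, lt_of_not_ge hfa⟩
      have hzI : x₀ + y ∈ Icc (0:ℝ) 1 := ⟨by linarith, by linarith⟩
      have := hR2b x₀ hx₀I y hyI hzI
      have hfz : a < f (x₀ + y) := by
        rw [ha] at hyfa ⊢
        rw [div_lt_iff₀ (by linarith)]
        have hyfa' : f y * (2*C) ≤ b := (le_div_iff₀ (by linarith)).mp hyfa
        nlinarith [this, hx₀f, hyfa']
      have hzz : x₀ + y = z := by simp [hy]
      rw [hzz] at hfz hzI
      exact hzG ⟨hzI, hfz⟩
    refine ⟨x₀ + ε'/4, ⟨U, ⟨isOpen_Ioo, hM'.mono hUG⟩, ?_⟩, by linarith, by linarith⟩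
    constructor <;> [linarith; linarith]
end

section
/- For each n ∈ ℕ define t_n : (0,1] → ℝ recursively by t_0(x) = 1 − log x and t_{n+1}(x) = 1 + log(t_n(x)). Then for every n and all x, y ∈ (0,1]: 1 ≤ t_n(xy) ≤ t_n(x)·t_n(y). -/
open Set

noncomputable def tIter : ℕ → ℝ → ℝ
  | 0, x => 1 - Real.log x
  | n + 1, x => 1 + Real.log (tIter n x)

/-- Submultiplicativity of the iterated logarithms `t_n`. -/
theorem stmt10 :
    ∀ n : ℕ, ∀ x ∈ Ioc (0:ℝ) 1, ∀ y ∈ Ioc (0:ℝ) 1,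
      1 ≤ tIter n (x * y) ∧ tIter n (x * y) ≤ tIter n x * tIter n y := by
  have hone : ∀ n : ℕ, ∀ x ∈ Ioc (0:ℝ) 1, 1 ≤ tIter n x := by
    intro n
    induction n with
    | zero =>
      intro x hx
      have : Real.log x ≤ 0 := Real.log_nonpos hx.1.le hx.2
      simp [tIter]; linarith
    | succ n ih =>
      intro x hx
      have h1 := ih x hx
      have : 0 ≤ Real.log (tIter n x) := Real.log_nonneg h1
      simp [tIter]; linarith
  intro n
  induction n with
  | zero =>
    intro x hx y hy
    have hxy : x * y ∈ Ioc (0:ℝ) 1 :=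
      ⟨mul_pos hx.1 hy.1, mul_le_one₀ hx.2 hy.1.le hy.2⟩
    refine ⟨hone 0 _ hxy, ?_⟩
    have hlx : Real.log x ≤ 0 := Real.log_nonpos hx.1.le hx.2
    have hly : Real.log y ≤ 0 := Real.log_nonpos hy.1.le hy.2
    have hmul : 0 ≤ Real.log x * Real.log y := mul_nonneg_iff.2 (Or.inr ⟨hlx, hly⟩)
    simp only [tIter, Real.log_mul hx.1.ne' hy.1.ne']
    nlinarith
  | succ n ih =>
    intro x hx y hy
    have hxy : x * y ∈ Ioc (0:ℝ) 1 :=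
      ⟨mul_pos hx.1 hy.1, mul_le_one₀ hx.2 hy.1.le hy.2⟩
    refine ⟨hone (n+1) _ hxy, ?_⟩
    have ha : 1 ≤ tIter n x := hone n x hx
    have hb : 1 ≤ tIter n y := hone n y hy
    have hab := (ih x hx y hy).2
    have hla : 0 ≤ Real.log (tIter n x) := Real.log_nonneg ha
    have hlb : 0 ≤ Real.log (tIter n y) := Real.log_nonneg hb
    have hmono : Real.log (tIter n (x*y)) ≤ Real.log (tIter n x * tIter n y) :=
      Real.log_le_log (lt_of_lt_of_le one_pos (hone n _ hxy)) hab
    simp only [tIter] at *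
    rw [Real.log_mul (by linarith) (by linarith)] at hmono
    nlinarith
end

section
/- Let α ≥ 1 and let ℓ : (0,1] → [1,∞) be decreasing with ℓ(xy) ≤ ℓ(x)ℓ(y) for all x,y ∈ (0,1]. Define f(0) = 0 and f(x) = x^α/ℓ(x) for x ∈ (0,1]. Then f is strictly increasing and satisfies (R2): there is C ≥ 1 such that f(x+y) ≤ C(f(x)+f(y)) and f(x) ≤ C(f(x+y)+f(y)) for all x, y ∈ [0,1] with x+y ≤ 1. In particular E_f is an equivalence relation. -/
open Set

/-- `f = Id^α/ℓ` is strictly increasing, satisfies (R2), and `E_f` is an equivalence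
relation. -/
theorem stmt12 (α : ℝ) (hα : 1 ≤ α) (ℓ : ℝ → ℝ)
    (hge : ∀ x ∈ Ioc (0:ℝ) 1, 1 ≤ ℓ x)
    (hdec : ∀ x ∈ Ioc (0:ℝ) 1, ∀ y ∈ Ioc (0:ℝ) 1, x ≤ y → ℓ y ≤ ℓ x)
    (hsub : ∀ x ∈ Ioc (0:ℝ) 1, ∀ y ∈ Ioc (0:ℝ) 1, ℓ (x * y) ≤ ℓ x * ℓ y)
    (f : ℝ → ℝ) (hf0 : f 0 = 0) (hf : ∀ x ∈ Ioc (0:ℝ) 1, f x = x ^ α / ℓ x) :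
    StrictMonoOn f (Icc (0:ℝ) 1) ∧
    (∃ C : ℝ, 1 ≤ C ∧
      (∀ x ∈ Icc (0:ℝ) 1, ∀ y ∈ Icc (0:ℝ) 1, x + y ≤ 1 →
        f (x + y) ≤ C * (f x + f y)) ∧
      (∀ x ∈ Icc (0:ℝ) 1, ∀ y ∈ Icc (0:ℝ) 1, x + y ≤ 1 →
        f x ≤ C * (f (x + y) + f y))) ∧
    Equivalence (fun x y : {u : ℕ → ℝ // ∀ n, u n ∈ Icc (0:ℝ) 1} =>
      Summable fun n => f |y.1 n - x.1 n|) := by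
  have hαpos : (0:ℝ) < α := by linarith
  have hhalf : (1/2 : ℝ) ∈ Ioc (0:ℝ) 1 := ⟨by norm_num, by norm_num⟩
  have hℓpos : ∀ x ∈ Ioc (0:ℝ) 1, 0 < ℓ x := fun x hx => lt_of_lt_of_le one_pos (hge x hx)
  have hf_nonneg : ∀ x ∈ Icc (0:ℝ) 1, 0 ≤ f x := by
    intro x hx
    rcases eq_or_lt_of_le hx.1 with h | h
    · simp [← h, hf0]
    · rw [hf x ⟨h, hx.2⟩]
      exact div_nonneg (Real.rpow_nonneg (le_of_lt h) α) (hℓpos x ⟨h, hx.2⟩).le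
  have hmono : StrictMonoOn f (Icc (0:ℝ) 1) := by
    intro x hx y hy hxy
    have hy0 : 0 < y := lt_of_le_of_lt hx.1 hxy
    have hyI : y ∈ Ioc (0:ℝ) 1 := ⟨hy0, hy.2⟩
    have hfy : f y = y ^ α / ℓ y := hf y hyI
    rcases eq_or_lt_of_le hx.1 with h | h
    · rw [← h, hf0, hfy]
      exact div_pos (Real.rpow_pos_of_pos hy0 α) (hℓpos y hyI)
    · have hxI : x ∈ Ioc (0:ℝ) 1 := ⟨h, hx.2⟩
      rw [hf x hxI, hfy]
      have h1 : x ^ α < y ^ α := Real.rpow_lt_rpow h.le hxy hαpos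
      have h2 : ℓ y ≤ ℓ x := hdec x hxI y hyI hxy.le
      have h3 : 0 < ℓ y := hℓpos y hyI
      have h4 : 0 < ℓ x := hℓpos x hxI
      have h5 : 0 ≤ x ^ α := Real.rpow_nonneg h.le α
      calc x ^ α / ℓ x ≤ x ^ α / ℓ y := by gcongr
        _ < y ^ α / ℓ y := by gcongr
  -- the constant
  set K : ℝ := 2 ^ α * ℓ (1/2) with hKdef
  have h2α : (1:ℝ) ≤ 2 ^ α := by
    have h := Real.rpow_le_rpow_of_exponent_le one_le_two hαpos.le
    rwa [Real.rpow_zero] at h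
  have hℓh : 1 ≤ ℓ (1/2) := hge _ hhalf
  have hK1 : 1 ≤ K := by rw [hKdef]; nlinarith
  -- key lemma (asymmetric version)
  have key2 : ∀ a ∈ Icc (0:ℝ) 1, ∀ b ∈ Icc (0:ℝ) 1, a ≤ b → ∀ c ∈ Icc (0:ℝ) 1,
      c ≤ a + b → f c ≤ K * (f a + f b) := by
    intro a ha b hb hab c hc hcab
    have hfa : 0 ≤ f a := hf_nonneg a ha
    have hfb : 0 ≤ f b := hf_nonneg b hb
    rcases le_or_gt c b with h | h
    · have h1 : f c ≤ f b := by
        rcases eq_or_lt_of_le h with h' | h'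
        · rw [h']
        · exact (hmono hc hb h').le
      nlinarith
    · -- b < c
      have hb0 : 0 < b := by linarith
      have hc0 : 0 < c := hb0.trans h
      have hbI : b ∈ Ioc (0:ℝ) 1 := ⟨hb0, hb.2⟩
      have hcI : c ∈ Ioc (0:ℝ) 1 := ⟨hc0, hc.2⟩
      have hkey : ℓ b ≤ ℓ (1/2) * ℓ c := by
        have h1 : ℓ b ≤ ℓ (c/2) :=
          hdec (c/2) ⟨by linarith, by linarith [hc.2]⟩ b hbI (by linarith)
        have h2 : ℓ (c/2) ≤ ℓ (1/2) * ℓ c := by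
          have := hsub (1/2) hhalf c hcI
          rwa [show (1/2 : ℝ) * c = c/2 by ring] at this
        linarith
      rw [hf c hcI, hf b hbI]
      have hca : c ^ α ≤ 2 ^ α * b ^ α := by
        have h1 : c ^ α ≤ (2*b) ^ α := Real.rpow_le_rpow hc0.le (by linarith) hαpos.le
        rwa [Real.mul_rpow (by norm_num) hb0.le] at h1
      have hℓb := hℓpos b hbI
      have hℓc := hℓpos c hcI
      have hmain : c ^ α / ℓ c ≤ K * (b ^ α / ℓ b) := by
        rw [show K * (b ^ α / ℓ b) = K * b ^ α / ℓ b by ring,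
          div_le_div_iff₀ hℓc hℓb]
        have h1 : c ^ α * ℓ b ≤ (2 ^ α * b ^ α) * (ℓ (1/2) * ℓ c) :=
          mul_le_mul hca hkey hℓb.le (by positivity)
        calc c ^ α * ℓ b ≤ (2 ^ α * b ^ α) * (ℓ (1/2) * ℓ c) := h1
          _ = K * b ^ α * ℓ c := by rw [hKdef]; ring
      have hexp : K * (f a + b ^ α / ℓ b) = K * f a + K * (b ^ α / ℓ b) := by ring
      have hpos : 0 ≤ K * f a := mul_nonneg (by linarith) hfa
      rw [hexp]
      linarith
  -- symmetric key lemma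
  have key : ∀ a ∈ Icc (0:ℝ) 1, ∀ b ∈ Icc (0:ℝ) 1, ∀ c ∈ Icc (0:ℝ) 1,
      c ≤ a + b → f c ≤ K * (f a + f b) := by
    intro a ha b hb c hc hcab
    rcases le_total a b with h | h
    · exact key2 a ha b hb h c hc hcab
    · have h1 := key2 b hb a ha h c hc (by linarith)
      have h2 : K * (f b + f a) = K * (f a + f b) := by ring
      linarith
  refine ⟨hmono, ⟨K, hK1, ?_, ?_⟩, ?_, ?_, ?_⟩
  · intro x hx y hy hxy
    exact key x hx y hy (x+y) ⟨by linarith [hx.1, hy.1], hxy⟩ le_rfl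
  · intro x hx y hy hxy
    have hxyI : x + y ∈ Icc (0:ℝ) 1 := ⟨by linarith [hx.1, hy.1], hxy⟩
    have h1 : f x ≤ f (x + y) := hmono.monotoneOn hx hxyI (by linarith [hy.1])
    have h2 : 0 ≤ f y := hf_nonneg y hy
    have h3 : 0 ≤ f (x + y) := hf_nonneg _ hxyI
    nlinarith
  · intro x
    have h : (fun n => f |x.1 n - x.1 n|) = fun _ => (0:ℝ) := by
      funext n; simp [hf0]
    rw [h]; exact summable_zero
  · intro x y h
    have he : (fun n => f |x.1 n - y.1 n|) = fun n => f |y.1 n - x.1 n| := by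
      funext n; rw [abs_sub_comm]
    rw [he]; exact h
  · intro x y z hxy hyz
    have habs : ∀ (u v : ℝ), u ∈ Icc (0:ℝ) 1 → v ∈ Icc (0:ℝ) 1 →
        |u - v| ∈ Icc (0:ℝ) 1 := by
      intro u v hu hv
      refine ⟨abs_nonneg _, abs_le.2 ⟨by linarith [hu.1, hu.2, hv.1, hv.2],
        by linarith [hu.1, hu.2, hv.1, hv.2]⟩⟩
    refine Summable.of_nonneg_of_le
      (fun n => hf_nonneg _ (habs _ _ (z.2 n) (x.2 n)))
      (fun n => key _ (habs _ _ (z.2 n) (y.2 n)) _ (habs _ _ (y.2 n) (x.2 n))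
        _ (habs _ _ (z.2 n) (x.2 n)) (abs_sub_le _ _ _))
      ((hyz.add hxy).mul_left K)
end

section
/- Let ψ : (0,1] → (0,∞) be essentially decreasing with x^α ψ(x) ≤ B for all x ∈ (0,1] (some B ≥ 1, α ≥ 1), and suppose liminf_{x→0+} x^δ ψ(x) = 0 for every δ > 0. Then for every integer n ≥ 2 there exists μ ∈ (0,1] with ψ(μ/n) ≤ 2ψ(μ). -/
open Set

/-- If `x^α ψ` is bounded, `ψ` essentially decreasing and `liminf x^δ ψ(x) = 0` for all
`δ > 0`, then for every `n ≥ 2` there is `μ` with `ψ(μ/n) ≤ 2ψ(μ)`. -/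
theorem stmt17 (α B C : ℝ) (hα : 1 ≤ α) (hB : 1 ≤ B) (hC : 1 ≤ C)
    (ψ : ℝ → ℝ) (hpos : ∀ x ∈ Ioc (0:ℝ) 1, 0 < ψ x)
    (hdec : ∀ x ∈ Ioc (0:ℝ) 1, ∀ y ∈ Ioc (0:ℝ) 1, x ≤ y → ψ y ≤ C * ψ x)
    (hbd : ∀ x ∈ Ioc (0:ℝ) 1, x ^ α * ψ x ≤ B)
    (hliminf : ∀ δ > (0:ℝ), ∀ c > (0:ℝ), ∀ ε > (0:ℝ),
      ∃ x ∈ Ioc (0:ℝ) 1, x < ε ∧ x ^ δ * ψ x < c) :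
    ∀ n : ℕ, 2 ≤ n → ∃ μ ∈ Ioc (0:ℝ) 1, ψ (μ / n) ≤ 2 * ψ μ := by
  intro n hn
  by_contra hcon
  push_neg at hcon
  set N : ℝ := (n : ℝ) with hNdef
  have hN2 : (2:ℝ) ≤ N := by rw [hNdef]; exact_mod_cast hn
  have hN1 : (1:ℝ) < N := by linarith
  have hN0 : (0:ℝ) < N := by linarith
  have hNinv0 : (0:ℝ) < N⁻¹ := by positivity
  have hNinv1 : N⁻¹ ≤ 1 := by
    rw [inv_le_one_iff₀]; right; linarith
  -- u k := N⁻¹ ^ k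
  set u : ℕ → ℝ := fun k => N⁻¹ ^ k with hu
  have humem : ∀ k, u k ∈ Ioc (0:ℝ) 1 := by
    intro k
    constructor
    · positivity
    · exact pow_le_one₀ (le_of_lt hNinv0) hNinv1
  have hustep : ∀ k, u k / N = u (k + 1) := by
    intro k
    simp [hu, pow_succ, div_eq_mul_inv]
    ring
  have hψ1 : 0 < ψ 1 := hpos 1 (by norm_num)
  have hkey : ∀ k : ℕ, 2 ^ k * ψ 1 ≤ ψ (u k) := by
    intro k
    induction k with
    | zero => simp [hu]
    | succ k ih =>
        have h1 : 2 * ψ (u k) < ψ (u k / n) := hcon (u k) (humem k)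
        rw [← hNdef] at h1
        rw [hustep k] at h1
        have : 2 * (2 ^ k * ψ 1) ≤ 2 * ψ (u k) := by linarith
        calc 2 ^ (k+1) * ψ 1 = 2 * (2 ^ k * ψ 1) := by ring
          _ ≤ 2 * ψ (u k) := this
          _ ≤ ψ (u (k+1)) := le_of_lt h1
  -- pick δ
  have hlogN : 0 < Real.log N := Real.log_pos hN1
  set δ : ℝ := Real.log 2 / Real.log N with hδdef
  have hδ0 : 0 < δ := div_pos (Real.log_pos one_lt_two) hlogN
  have hNδ : N ^ δ = 2 := by
    rw [← Real.rpow_logb hN0 (ne_of_gt hN1) (by norm_num : (0:ℝ) < 2)]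
    congr 1
  have hc0 : 0 < ψ 1 / (2 * C) := by positivity
  obtain ⟨x, hx, hx1, hxδ⟩ := hliminf δ hδ0 (ψ 1 / (2 * C)) hc0 1 one_pos
  -- find minimal k with u (k+1) < x
  have hex : ∃ k, u (k + 1) < x := by
    have hNinvlt : N⁻¹ < 1 := by
      rw [inv_lt_one_iff₀]; right; exact hN1
    obtain ⟨k, hk⟩ := exists_pow_lt_of_lt_one hx.1 hNinvlt
    exact ⟨k, lt_of_le_of_lt (by
      apply pow_le_pow_of_le_one (le_of_lt hNinv0) hNinv1; omega) hk⟩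
  classical
  set k := Nat.find hex with hkdef
  have hk1 : u (k + 1) < x := Nat.find_spec hex
  have hxu : x ≤ u k := by
    rcases Nat.eq_zero_or_pos k with h0 | h0
    · rw [h0]; simpa [hu] using hx.2
    · have := Nat.find_min hex (m := k - 1) (by omega)
      push_neg at this
      have hk' : k - 1 + 1 = k := by omega
      rwa [hk'] at this
  -- ψ x ≥ 2^k ψ 1 / C
  have hC0 : 0 < C := by linarith
  have hψx : 2 ^ k * ψ 1 ≤ C * ψ x :=
    le_trans (hkey k) (hdec x hx (u k) (humem k) hxu)
  -- x ^ δ ≥ 2⁻¹ ^ (k+1)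
  have hxδge : ((2:ℝ) ^ (k+1))⁻¹ ≤ x ^ δ := by
    have h1 : (u (k+1)) ^ δ ≤ x ^ δ :=
      Real.rpow_le_rpow (le_of_lt (humem (k+1)).1) (le_of_lt hk1) (le_of_lt hδ0)
    have h2 : (u (k+1)) ^ δ = ((2:ℝ) ^ (k+1))⁻¹ := by
      rw [hu]
      simp only
      rw [← Real.rpow_natCast (N⁻¹) (k+1), ← Real.rpow_mul (le_of_lt hNinv0),
        Real.inv_rpow (le_of_lt hN0), ← Real.rpow_natCast (2:ℝ) (k+1), ← hNδ,
        ← Real.rpow_mul (le_of_lt hN0)]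
      ring_nf
    rwa [h2] at h1
  have hψx0 : 0 < ψ x := hpos x hx
  have hfinal : ψ 1 / (2 * C) ≤ x ^ δ * ψ x := by
    have h3 : ((2:ℝ) ^ (k+1))⁻¹ * (2 ^ k * ψ 1 / C) ≤ x ^ δ * ψ x := by
      apply mul_le_mul hxδge _ (le_of_lt (div_pos (mul_pos (by positivity) hψ1) hC0)) (Real.rpow_nonneg hx.1.le δ)
      rw [div_le_iff₀ hC0]
      linarith [hψx]
    calc ψ 1 / (2 * C) = ((2:ℝ) ^ (k+1))⁻¹ * (2 ^ k * ψ 1 / C) := by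
          field_simp; ring
      _ ≤ x ^ δ * ψ x := h3
  linarith
end

section
/- Let γ = 17/16 and for U ⊆ ℕ define μ_U(0) = 1 and μ_U^α(n) = γ^{|U ∩ {0,…,⌊1+log n⌋−1}|} for n ≥ 1. Set σ_U(n) = Σ_{i=1}^n μ_U^α(i). Then the sequence ((1+σ_U(n))/n²)_{n≥1} is essentially decreasing: there is a constant D (independent of U) such that for all 1 ≤ n < m, (1+σ_U(m))/m² ≤ D·(1+σ_U(n))/n². -/
open Set

noncomputable def muA (U : Set ℕ) (n : ℕ) : ℝ :=
  if n = 0 then 1 else (17 / 16 : ℝ) ^ (U ∩ Set.Iio ⌊1 + Real.log n⌋₊).ncard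

noncomputable def sigmaA (U : Set ℕ) (n : ℕ) : ℝ := ∑ i ∈ Finset.Icc 1 n, muA U i

private lemma finInter (U : Set ℕ) (k : ℕ) : (U ∩ Set.Iio k).Finite :=
  (Set.finite_Iio k).inter_of_right U

private lemma one_le_muA (U : Set ℕ) (n : ℕ) : 1 ≤ muA U n := by
  unfold muA
  split
  · exact le_refl 1
  · exact one_le_pow₀ (by norm_num)

private lemma muA_ne (U : Set ℕ) {n : ℕ} (h : n ≠ 0) :
    muA U n = (17 / 16 : ℝ) ^ (U ∩ Set.Iio ⌊1 + Real.log n⌋₊).ncard := if_neg h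

private lemma ncard_mono (U : Set ℕ) {a b : ℕ} (h : a ≤ b) :
    (U ∩ Set.Iio a).ncard ≤ (U ∩ Set.Iio b).ncard :=
  Set.ncard_le_ncard (Set.inter_subset_inter_right U (Set.Iio_subset_Iio h)) (finInter U b)

private lemma ncard_succ_le (U : Set ℕ) (k : ℕ) :
    (U ∩ Set.Iio (k + 1)).ncard ≤ (U ∩ Set.Iio k).ncard + 1 := by
  have hsub : U ∩ Set.Iio (k + 1) ⊆ insert k (U ∩ Set.Iio k) := by
    intro x hx
    rcases hx with ⟨hxU, hxk⟩
    simp only [Set.mem_Iio] at hxk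
    rcases Nat.lt_succ_iff_lt_or_eq.mp hxk with h | h
    · exact Set.mem_insert_of_mem _ ⟨hxU, h⟩
    · simp [h]
  calc (U ∩ Set.Iio (k + 1)).ncard ≤ (insert k (U ∩ Set.Iio k)).ncard :=
        Set.ncard_le_ncard hsub ((finInter U k).insert k)
    _ ≤ (U ∩ Set.Iio k).ncard + 1 := Set.ncard_insert_le _ _

private lemma K_mono {n m : ℕ} (hn : 1 ≤ n) (h : n ≤ m) :
    ⌊1 + Real.log n⌋₊ ≤ ⌊1 + Real.log m⌋₊ :=
  Nat.floor_le_floor (by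
    have : Real.log n ≤ Real.log m := Real.log_le_log (by exact_mod_cast hn) (by exact_mod_cast h)
    linarith)

private lemma muA_mono (U : Set ℕ) {n m : ℕ} (hn : 1 ≤ n) (h : n ≤ m) :
    muA U n ≤ muA U m := by
  rw [muA_ne U (by omega), muA_ne U (by omega)]
  exact pow_le_pow_right₀ (by norm_num) (ncard_mono U (K_mono hn h))

/-- If `n ≤ 2 i` then `μ(n) ≤ γ μ(i)`. -/
private lemma muA_half (U : Set ℕ) {n i : ℕ} (hi : 1 ≤ i) (hn : 1 ≤ n) (h : n ≤ 2 * i) :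
    muA U n ≤ (17 / 16 : ℝ) * muA U i := by
  rw [muA_ne U (by omega), muA_ne U (by omega)]
  have hlog : Real.log n ≤ Real.log i + 1 := by
    have h1 : Real.log n ≤ Real.log (2 * i) :=
      Real.log_le_log (by exact_mod_cast hn) (by exact_mod_cast h)
    have h2 : Real.log ((2 : ℕ) * i : ℕ) = Real.log 2 + Real.log i := by
      push_cast
      exact Real.log_mul (by norm_num) (by positivity)
    have h3 : Real.log 2 ≤ 1 := by
      have := Real.log_le_sub_one_of_pos (x := 2) (by norm_num)
      linarith
    push_cast at h1 h2 ⊢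
    rw [h2] at h1
    linarith
  have hK : ⌊1 + Real.log n⌋₊ ≤ ⌊1 + Real.log i⌋₊ + 1 := by
    have h0 : (0 : ℝ) ≤ 1 + Real.log i := by
      have : (0 : ℝ) ≤ Real.log i := Real.log_nonneg (by exact_mod_cast hi)
      linarith
    calc ⌊1 + Real.log n⌋₊ ≤ ⌊(1 + Real.log i) + 1⌋₊ :=
          Nat.floor_le_floor (by linarith)
      _ = ⌊1 + Real.log i⌋₊ + 1 := Nat.floor_add_one h0
  calc (17 / 16 : ℝ) ^ (U ∩ Set.Iio ⌊1 + Real.log n⌋₊).ncard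
      ≤ (17 / 16 : ℝ) ^ ((U ∩ Set.Iio ⌊1 + Real.log i⌋₊).ncard + 1) := by
        apply pow_le_pow_right₀ (by norm_num)
        calc (U ∩ Set.Iio ⌊1 + Real.log n⌋₊).ncard
            ≤ (U ∩ Set.Iio (⌊1 + Real.log i⌋₊ + 1)).ncard := ncard_mono U hK
          _ ≤ (U ∩ Set.Iio ⌊1 + Real.log i⌋₊).ncard + 1 := ncard_succ_le U _
    _ = (17 / 16 : ℝ) * (17 / 16 : ℝ) ^ (U ∩ Set.Iio ⌊1 + Real.log i⌋₊).ncard := by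
        rw [pow_succ]; ring

/-- For `1 ≤ n ≤ m`, `n μ(m) ≤ γ m μ(n)`. -/
private lemma muA_ratio (U : Set ℕ) {n m : ℕ} (hn : 1 ≤ n) (h : n ≤ m) :
    (n : ℝ) * muA U m ≤ (17 / 16 : ℝ) * m * muA U n := by
  have hm : 1 ≤ m := le_trans hn h
  set Kn := ⌊1 + Real.log n⌋₊ with hKn
  set Km := ⌊1 + Real.log m⌋₊ with hKm
  set b := (U ∩ Set.Iio Kn).ncard with hb
  set a := (U ∩ Set.Iio Km).ncard with ha
  have hba : b ≤ a := ncard_mono U (K_mono hn h)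
  have hab : a ≤ b + (Km - Kn) := by
    have hsub : U ∩ Set.Iio Km ⊆ (U ∩ Set.Iio Kn) ∪ Set.Ico Kn Km := by
      intro x ⟨hxU, hx⟩
      simp only [Set.mem_Iio] at hx
      by_cases hxk : x < Kn
      · exact Or.inl ⟨hxU, hxk⟩
      · exact Or.inr ⟨Nat.le_of_not_lt hxk, hx⟩
    calc a ≤ ((U ∩ Set.Iio Kn) ∪ Set.Ico Kn Km).ncard :=
          Set.ncard_le_ncard hsub ((finInter U Kn).union (Set.finite_Ico Kn Km))
      _ ≤ b + (Set.Ico Kn Km).ncard := Set.ncard_union_le _ _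
      _ = b + (Km - Kn) := by
          rw [Set.ncard_eq_toFinset_card', Set.toFinset_Ico, Nat.card_Ico]
  -- bound on the exponent difference, as reals
  have hlogn : (0:ℝ) ≤ Real.log n := Real.log_nonneg (by exact_mod_cast hn)
  have hexp : ((a - b : ℕ) : ℝ) ≤ 1 + Real.log m - Real.log n := by
    have h1 : (Km : ℝ) ≤ 1 + Real.log m := Nat.floor_le (by
      have : (0:ℝ) ≤ Real.log m := Real.log_nonneg (by exact_mod_cast hm)
      linarith)
    have h2 : Real.log n < (Kn : ℝ) := by
      have := Nat.sub_one_lt_floor (1 + Real.log n)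
      simpa using this
    have h3 : ((a - b : ℕ) : ℝ) ≤ (Km : ℝ) - Kn := by
      have h4 : a - b ≤ Km - Kn := by omega
      have h5 : (Kn : ℕ) ≤ Km := K_mono hn h
      have := (Nat.cast_le (α := ℝ)).mpr h4
      calc ((a - b : ℕ) : ℝ) ≤ ((Km - Kn : ℕ) : ℝ) := this
        _ = (Km : ℝ) - Kn := by push_cast [h5]; ring
    linarith
  -- γ^(a-b) ≤ γ * m / n
  have hγ0 : (0:ℝ) < 17/16 := by norm_num
  have hlogγ0 : (0:ℝ) ≤ Real.log (17/16) := Real.log_nonneg (by norm_num)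
  have hlogγ1 : Real.log (17/16 : ℝ) ≤ 1 := by
    have := Real.log_le_sub_one_of_pos hγ0
    linarith
  have hlogmn : (0:ℝ) ≤ Real.log m - Real.log n := by
    have hnR : (1:ℝ) ≤ (n:ℝ) := by exact_mod_cast hn
    have := Real.log_le_log (show (0:ℝ) < (n:ℝ) by linarith) (show ((n:ℝ)) ≤ (m:ℝ) by exact_mod_cast h)
    linarith
  have hpow : (17/16 : ℝ) ^ (a - b) ≤ (17/16 : ℝ) * m / n := by
    have e1 : (17/16 : ℝ) ^ (a - b) = Real.exp (((a - b : ℕ):ℝ) * Real.log (17/16)) := by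
      rw [Real.exp_nat_mul, Real.exp_log hγ0]
    have e2 : ((a - b : ℕ):ℝ) * Real.log (17/16) ≤
        Real.log (17/16) + (Real.log m - Real.log n) := by
      have : ((a - b : ℕ):ℝ) * Real.log (17/16) ≤
          (1 + Real.log m - Real.log n) * Real.log (17/16) :=
        mul_le_mul_of_nonneg_right hexp hlogγ0
      nlinarith
    have e3 : Real.exp (Real.log (17/16) + (Real.log m - Real.log n)) =
        (17/16 : ℝ) * m / n := by
      rw [Real.exp_add, Real.exp_sub, Real.exp_log hγ0, Real.exp_log, Real.exp_log]
      · ring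
      · exact_mod_cast Nat.lt_of_lt_of_le Nat.zero_lt_one hn
      · exact_mod_cast Nat.lt_of_lt_of_le Nat.zero_lt_one hm
    calc (17/16 : ℝ) ^ (a - b) = Real.exp (((a - b : ℕ):ℝ) * Real.log (17/16)) := e1
      _ ≤ Real.exp (Real.log (17/16) + (Real.log m - Real.log n)) := Real.exp_le_exp.mpr e2
      _ = (17/16 : ℝ) * m / n := e3
  rw [muA_ne U (by omega), muA_ne U (by omega), ← ha, ← hb]
  have hsplit : (17/16 : ℝ) ^ a = (17/16 : ℝ) ^ b * (17/16 : ℝ) ^ (a - b) := by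
    rw [← pow_add]
    congr 1
    omega
  have hnpos : (0:ℝ) < n := by exact_mod_cast Nat.lt_of_lt_of_le Nat.zero_lt_one hn
  have hbpos : (0:ℝ) < (17/16 : ℝ) ^ b := by positivity
  rw [hsplit]
  calc (n:ℝ) * ((17/16:ℝ)^b * (17/16:ℝ)^(a-b))
      ≤ (n:ℝ) * ((17/16:ℝ)^b * ((17/16:ℝ) * m / n)) := by
        apply mul_le_mul_of_nonneg_left _ (le_of_lt hnpos)
        exact mul_le_mul_of_nonneg_left hpow (le_of_lt hbpos)
    _ = (17/16:ℝ) * m * (17/16:ℝ)^b := by field_simp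

private lemma sigma_lower (U : Set ℕ) {n : ℕ} (hn : 1 ≤ n) :
    (n : ℝ) * muA U n ≤ 2 * (17/16) * sigmaA U n := by
  set s := Finset.Icc (n/2 + 1) n with hs
  have hsub : s ⊆ Finset.Icc 1 n := Finset.Icc_subset_Icc (by omega) le_rfl
  have h1 : ∑ i ∈ s, (17/16 : ℝ) * muA U i ≤ (17/16) * sigmaA U n := by
    rw [← Finset.mul_sum]
    apply mul_le_mul_of_nonneg_left _ (by norm_num)
    exact Finset.sum_le_sum_of_subset_of_nonneg hsub
      (fun i _ _ => le_trans zero_le_one (one_le_muA U i))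
  have h2 : (s.card : ℝ) * muA U n ≤ ∑ i ∈ s, (17/16 : ℝ) * muA U i := by
    rw [← nsmul_eq_mul]
    apply Finset.card_nsmul_le_sum
    intro i hi
    simp only [hs, Finset.mem_Icc] at hi
    exact muA_half U (by omega) hn (by omega)
  have hcard : s.card = n - n/2 := by
    rw [hs, Nat.card_Icc]; omega
  have hcard2 : (n : ℝ) ≤ 2 * s.card := by
    have : n ≤ 2 * s.card := by rw [hcard]; omega
    exact_mod_cast this
  have hμ : (0:ℝ) ≤ muA U n := le_trans zero_le_one (one_le_muA U n)
  nlinarith [mul_le_mul_of_nonneg_right hcard2 hμ]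

private lemma sigma_upper (U : Set ℕ) {n m : ℕ} (hn : 1 ≤ n) (h : n < m) :
    sigmaA U m ≤ sigmaA U n + (m : ℝ) * muA U m := by
  have hIcc : ∀ k : ℕ, Finset.Icc 1 k = Finset.Ioc 0 k := fun k => by
    rw [← Finset.Icc_add_one_left_eq_Ioc, zero_add]
  have hsplit : sigmaA U m = sigmaA U n + ∑ i ∈ Finset.Ioc n m, muA U i := by
    unfold sigmaA
    rw [hIcc, hIcc, ← Finset.sum_Ioc_consecutive (muA U) (Nat.zero_le n) (le_of_lt h)]
  have hbound : ∑ i ∈ Finset.Ioc n m, muA U i ≤ (m : ℝ) * muA U m := by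
    calc ∑ i ∈ Finset.Ioc n m, muA U i ≤ (Finset.Ioc n m).card • muA U m := by
          apply Finset.sum_le_card_nsmul
          intro i hi
          simp only [Finset.mem_Ioc] at hi
          exact muA_mono U (by omega) hi.2
      _ = ((Finset.Ioc n m).card : ℝ) * muA U m := nsmul_eq_mul _ _
      _ ≤ (m : ℝ) * muA U m := by
          apply mul_le_mul_of_nonneg_right _ (le_trans zero_le_one (one_le_muA U m))
          rw [Nat.card_Ioc]
          exact_mod_cast Nat.sub_le m n
  linarith [hsplit, hbound]

/-- `((1+σ_U(n))/n²)` is essentially decreasing, uniformly in `U`. -/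
theorem stmt18 : ∃ D : ℝ, 1 ≤ D ∧ ∀ U : Set ℕ, ∀ n m : ℕ, 1 ≤ n → n < m →
    (1 + sigmaA U m) / (m : ℝ) ^ 2 ≤ D * ((1 + sigmaA U n) / (n : ℝ) ^ 2) := by
  refine ⟨9, by norm_num, fun U n m hn hnm => ?_⟩
  have hm : 1 ≤ m := le_of_lt (lt_of_le_of_lt hn hnm)
  have hnR : (1:ℝ) ≤ (n:ℝ) := by exact_mod_cast hn
  have hmR : (1:ℝ) ≤ (m:ℝ) := by exact_mod_cast hm
  have hnmR : (n:ℝ) ≤ (m:ℝ) := by exact_mod_cast le_of_lt hnm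
  have h1 := sigma_upper U hn hnm
  have h2 := muA_ratio U hn (le_of_lt hnm)
  have h3 := sigma_lower U hn
  have hσn : (0:ℝ) ≤ sigmaA U n := by
    unfold sigmaA
    exact Finset.sum_nonneg fun i _ => le_trans zero_le_one (one_le_muA U i)
  have hμn : (1:ℝ) ≤ muA U n := one_le_muA U n
  have hμm : (1:ℝ) ≤ muA U m := one_le_muA U m
  rw [div_le_iff₀ (by positivity), mul_comm (9:ℝ), mul_assoc, div_mul_eq_mul_div,
    le_div_iff₀ (by positivity)]
  -- goal: (1 + sigmaA U m) * n^2 ≤ (1 + sigmaA U n) * (9 * m^2)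
  nlinarith [mul_le_mul_of_nonneg_left h1 (by positivity : (0:ℝ) ≤ (n:ℝ)^2),
    mul_le_mul_of_nonneg_left h2 (by positivity : (0:ℝ) ≤ (n:ℝ) * m),
    mul_le_mul_of_nonneg_left h3 (by positivity : (0:ℝ) ≤ (m:ℝ)^2),
    mul_le_mul_of_nonneg_right (mul_le_mul hnmR hnmR (by linarith) (by linarith))
      (by linarith : (0:ℝ) ≤ 1 + sigmaA U n),
    sq_nonneg ((m:ℝ) - n), mul_pos (lt_of_lt_of_le zero_lt_one hnR) (lt_of_lt_of_le zero_lt_one hmR)]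
end
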